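/- arXiv:2111.08399 — 4 statements merged into one kernel-verified Lean document; each statement's English description precedes it below -/
import Mathlib

section
/- Let g be a 7-dimensional real Lie algebra with Chevalley–Eilenberg differential d on Λg*, and let X be a nonzero central element of g. Let ω ∈ Λ²g*, ψ₊ ∈ Λ³g* and η ∈ g* satisfy ι_X ψ₊ = 0 and ω ∧ ψ₊ = 0. If ω ∧ ω ∧ dη = −2·ψ₊ ∧ dω, then the 3-form φ = ω ∧ η + ψ₊ satisfies φ ∧ dφ = 0. (This is the purity part of Theorem 'construction' of the paper.) -/
set_option synthInstance.maxHeartbeats 1000000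
set_option maxHeartbeats 1000000

open ExteriorAlgebra Module

noncomputable section

/-- The degree-`k` homogeneous component of the exterior algebra of `V`. -/
def degPart (V : Type*) [AddCommGroup V] [Module ℝ V] (k : ℕ) :
    Submodule ℝ (ExteriorAlgebra ℝ V) :=
  LinearMap.range (ExteriorAlgebra.ι ℝ : V →ₗ[ℝ] ExteriorAlgebra ℝ V) ^ k

/-- `c` is the interior product (contraction) with the vector `X : V`, acting on the exterior
algebra `Λ V*` of the dual of `V`: it is an odd antiderivation which on a 1-form `α` gives the
scalar `α(X)`. -/
def IsContraction {V : Type*} [AddCommGroup V] [Module ℝ V] (X : V)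
    (c : ExteriorAlgebra ℝ (Dual ℝ V) →ₗ[ℝ] ExteriorAlgebra ℝ (Dual ℝ V)) : Prop :=
  (∀ k, ∀ x ∈ degPart (Dual ℝ V) k, ∀ y,
      c (x * y) = c x * y + ((-1 : ℝ)) ^ k • (x * c y)) ∧
  (∀ α : Dual ℝ V, c (ExteriorAlgebra.ι ℝ α) = algebraMap ℝ _ (α X))

variable {g : Type*} [LieRing g] [LieAlgebra ℝ g]

/-- `d` is the Chevalley–Eilenberg differential of `g` on `Λ g*`, expressed with respect to a
basis `b` of `g`: it raises degree by one, is an odd derivation, and on 1-forms it is given by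
`dα = -Σ_{i<j} α([b i, b j]) bⁱ ∧ bʲ` (which encodes `dα(x,y) = -α([x,y])`). -/
def IsCEDifferential {n : ℕ} (b : Basis (Fin n) ℝ g)
    (d : ExteriorAlgebra ℝ (Dual ℝ g) →ₗ[ℝ] ExteriorAlgebra ℝ (Dual ℝ g)) : Prop :=
  (∀ k, ∀ x ∈ degPart (Dual ℝ g) k, d x ∈ degPart (Dual ℝ g) (k + 1)) ∧
  (∀ k, ∀ x ∈ degPart (Dual ℝ g) k, ∀ y,
      d (x * y) = d x * y + ((-1 : ℝ)) ^ k • (x * d y)) ∧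
  (∀ α : Dual ℝ g, d (ExteriorAlgebra.ι ℝ α) =
    (-(2⁻¹ : ℝ)) • ∑ i, ∑ j, α ⁅b i, b j⁆ •
      (ExteriorAlgebra.ι ℝ (b.dualBasis i) * ExteriorAlgebra.ι ℝ (b.dualBasis j)))

set_option maxHeartbeats 8000000

section Aux

variable {V : Type*} [AddCommGroup V] [Module ℝ V]

lemma degPart_mul_mem {j k : ℕ} {x y : ExteriorAlgebra ℝ V}
    (hx : x ∈ degPart V j) (hy : y ∈ degPart V k) : x * y ∈ degPart V (j + k) := by
  rw [degPart, pow_add]; exact Submodule.mul_mem_mul hx hy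

lemma ι_mem_degPart_one (v : V) : ExteriorAlgebra.ι ℝ v ∈ degPart V 1 := by
  rw [degPart, pow_one]; exact ⟨v, rfl⟩

lemma algebraMap_mem_degPart_zero (r : ℝ) :
    algebraMap ℝ (ExteriorAlgebra ℝ V) r ∈ degPart V 0 := by
  rw [degPart, pow_zero]; exact Submodule.mem_one.2 ⟨r, rfl⟩

lemma one_mem_degPart_zero : (1 : ExteriorAlgebra ℝ V) ∈ degPart V 0 := by
  simpa using algebraMap_mem_degPart_zero (V := V) 1

lemma exists_of_mem_degPart_zero {x : ExteriorAlgebra ℝ V} (hx : x ∈ degPart V 0) :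
    ∃ r : ℝ, x = algebraMap ℝ (ExteriorAlgebra ℝ V) r := by
  rw [degPart, pow_zero] at hx
  obtain ⟨r, hr⟩ := Submodule.mem_one.1 hx
  exact ⟨r, hr.symm⟩

lemma ι_anticomm (v w : V) :
    ExteriorAlgebra.ι ℝ v * ExteriorAlgebra.ι ℝ w
      = -(ExteriorAlgebra.ι ℝ w * ExteriorAlgebra.ι ℝ v) := by
  have := ExteriorAlgebra.ι_add_mul_swap (R := ℝ) v w
  exact eq_neg_of_add_eq_zero_left this

lemma swap_ι : ∀ (k : ℕ) (y : ExteriorAlgebra ℝ V), y ∈ degPart V k → ∀ v : V,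
    ExteriorAlgebra.ι ℝ v * y = ((-1 : ℝ)) ^ k • (y * ExteriorAlgebra.ι ℝ v) := by
  intro k
  induction k with
  | zero =>
    intro y hy v
    obtain ⟨r, rfl⟩ := exists_of_mem_degPart_zero hy
    rw [pow_zero, one_smul, Algebra.commutes]
  | succ k ih =>
    intro y hy v
    rw [degPart, pow_succ'] at hy
    refine Submodule.mul_induction_on hy (fun m hm z hz => ?_) (fun x₁ x₂ h₁ h₂ => ?_)
    case _ =>
      obtain ⟨w, rfl⟩ := hm
      have hz' : z ∈ degPart V k := hz
      rw [← mul_assoc, ι_anticomm v w, neg_mul, mul_assoc, ih z hz' v, mul_smul_comm,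
        ← neg_smul, mul_assoc]
      rw [pow_succ, mul_comm (((-1:ℝ))^k)]
      rw [mul_smul, neg_one_smul, neg_smul, ← mul_assoc]
    case _ =>
      rw [mul_add, add_mul, smul_add, h₁, h₂]

lemma supercomm : ∀ (j : ℕ) (x : ExteriorAlgebra ℝ V), x ∈ degPart V j →
    ∀ (k : ℕ) (y : ExteriorAlgebra ℝ V), y ∈ degPart V k →
    x * y = ((-1 : ℝ)) ^ (j * k) • (y * x) := by
  intro j
  induction j with
  | zero =>
    intro x hx k y hy
    obtain ⟨r, rfl⟩ := exists_of_mem_degPart_zero hx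
    rw [zero_mul, pow_zero, one_smul, Algebra.commutes]
  | succ j ih =>
    intro x hx k y hy
    rw [degPart, pow_succ'] at hx
    refine Submodule.mul_induction_on hx (fun m hm z hz => ?_) (fun x₁ x₂ h₁ h₂ => ?_)
    case _ =>
      obtain ⟨w, rfl⟩ := hm
      have hz' : z ∈ degPart V j := hz
      rw [mul_assoc, ih z hz' k y hy, mul_smul_comm, ← mul_assoc, swap_ι k y hy w,
        smul_mul_assoc, smul_smul, mul_assoc, ← pow_add]
      have hexp : j * k + k = (j + 1) * k := by ring
      rw [hexp]
    case _ =>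
      rw [add_mul, mul_add, smul_add, h₁, h₂]

/-- Product of a list of 1-forms. -/
def ιProd (l : List V) : ExteriorAlgebra ℝ V :=
  (l.map (fun v => ExteriorAlgebra.ι ℝ v)).prod

@[simp] lemma ιProd_nil : ιProd ([] : List V) = 1 := rfl

@[simp] lemma ιProd_cons (v : V) (l : List V) :
    ιProd (v :: l) = ExteriorAlgebra.ι ℝ v * ιProd l := by
  simp [ιProd]

lemma ι_mul_ιProd_of_mem {v : V} {l : List V} (hv : v ∈ l) :
    ExteriorAlgebra.ι ℝ v * ιProd l = 0 := by
  induction l with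
  | nil => simp at hv
  | cons w l ih =>
    rcases List.mem_cons.1 hv with rfl | hv
    · rw [ιProd_cons, ← mul_assoc, ExteriorAlgebra.ι_sq_zero, zero_mul]
    · rw [ιProd_cons, ← mul_assoc, ι_anticomm v w, neg_mul, mul_assoc, ih hv, mul_zero, neg_zero]

lemma ιProd_eq_zero_of_not_nodup {l : List V} (h : ¬ l.Nodup) : ιProd l = 0 := by
  induction l with
  | nil => simp at h
  | cons w l ih =>
    rw [List.nodup_cons] at h
    push_neg at h
    by_cases hw : w ∈ l
    · rw [ιProd_cons, ι_mul_ιProd_of_mem hw]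
    · rw [ιProd_cons, ih (h hw), mul_zero]

lemma degPart_le_span {n : ℕ} (f : Basis (Fin n) ℝ V) : ∀ k : ℕ,
    degPart V k ≤ Submodule.span ℝ
      {x | ∃ s : List (Fin n), s.length = k ∧ x = ιProd (s.map f)} := by
  intro k
  induction k with
  | zero =>
    rw [degPart, pow_zero, Submodule.one_eq_span]
    apply Submodule.span_mono
    rintro x hx
    rw [Set.mem_singleton_iff] at hx
    exact ⟨[], rfl, by simp [hx]⟩
  | succ k ih =>
    rw [degPart, pow_succ']
    apply Submodule.mul_le.2
    rintro m ⟨v, rfl⟩ z hz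
    have hz' := ih hz
    -- expand ι v over the basis
    have hv : ExteriorAlgebra.ι ℝ v
        = ∑ i, f.repr v i • ExteriorAlgebra.ι ℝ (f i) := by
      conv_lhs => rw [← f.sum_repr v]
      rw [map_sum]
      simp
    rw [hv, Finset.sum_mul]
    apply Submodule.sum_mem
    intro i _
    rw [smul_mul_assoc]
    apply Submodule.smul_mem
    have himg : ExteriorAlgebra.ι ℝ (f i) * z
        = LinearMap.mulLeft ℝ (ExteriorAlgebra.ι ℝ (f i)) z := rfl
    rw [himg]
    have hmem := Submodule.mem_map_of_mem
      (f := LinearMap.mulLeft ℝ (ExteriorAlgebra.ι ℝ (f i))) hz'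
    rw [Submodule.map_span] at hmem
    refine Submodule.span_mono ?_ hmem
    rintro y ⟨y', ⟨s, hs, rfl⟩, rfl⟩
    exact ⟨i :: s, by simp [hs], by simp [LinearMap.mulLeft_apply]⟩

lemma top_vanish {n : ℕ} (f : Basis (Fin n) ℝ V) {x : ExteriorAlgebra ℝ V}
    (hx : x ∈ degPart V (n + 1)) : x = 0 := by
  have h := degPart_le_span f (n + 1) hx
  have hset : {x : ExteriorAlgebra ℝ V |
      ∃ s : List (Fin n), s.length = n + 1 ∧ x = ιProd (s.map f)} ⊆ {0} := by
    rintro y ⟨s, hs, rfl⟩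
    have hnd : ¬ (s.map f).Nodup := by
      intro hnd
      have := (hnd.of_map).length_le_card
      simp [hs] at this
    simp [ιProd_eq_zero_of_not_nodup hnd]
  have := Submodule.span_mono hset h
  simpa using this

end Aux


section Aux2

variable {g : Type*} [LieRing g] [LieAlgebra ℝ g]

lemma contraction_one {X : g}
    {cX : ExteriorAlgebra ℝ (Dual ℝ g) →ₗ[ℝ] ExteriorAlgebra ℝ (Dual ℝ g)}
    (hcX : IsContraction X cX) : cX 1 = 0 := by
  have h := hcX.1 0 1 one_mem_degPart_zero 1
  simp only [mul_one, one_mul, pow_zero, one_smul] at h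
  exact (left_eq_add.mp h)

lemma contraction_algebraMap {X : g}
    {cX : ExteriorAlgebra ℝ (Dual ℝ g) →ₗ[ℝ] ExteriorAlgebra ℝ (Dual ℝ g)}
    (hcX : IsContraction X cX) (r : ℝ) :
    cX (algebraMap ℝ (ExteriorAlgebra ℝ (Dual ℝ g)) r) = 0 := by
  rw [Algebra.algebraMap_eq_smul_one, map_smul, contraction_one hcX, smul_zero]

lemma d_one {n : ℕ} {b : Basis (Fin n) ℝ g}
    {d : ExteriorAlgebra ℝ (Dual ℝ g) →ₗ[ℝ] ExteriorAlgebra ℝ (Dual ℝ g)}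
    (hd : IsCEDifferential b d) : d 1 = 0 := by
  have h := hd.2.1 0 1 one_mem_degPart_zero 1
  simp only [mul_one, one_mul, pow_zero, one_smul] at h
  exact (left_eq_add.mp h)

lemma d_algebraMap {n : ℕ} {b : Basis (Fin n) ℝ g}
    {d : ExteriorAlgebra ℝ (Dual ℝ g) →ₗ[ℝ] ExteriorAlgebra ℝ (Dual ℝ g)}
    (hd : IsCEDifferential b d) (r : ℝ) :
    d (algebraMap ℝ (ExteriorAlgebra ℝ (Dual ℝ g)) r) = 0 := by
  rw [Algebra.algebraMap_eq_smul_one, map_smul, d_one hd, smul_zero]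

lemma contraction_degPart {X : g}
    {cX : ExteriorAlgebra ℝ (Dual ℝ g) →ₗ[ℝ] ExteriorAlgebra ℝ (Dual ℝ g)}
    (hcX : IsContraction X cX) :
    ∀ k : ℕ, ∀ x ∈ degPart (Dual ℝ g) (k + 1), cX x ∈ degPart (Dual ℝ g) k := by
  intro k
  induction k with
  | zero =>
    intro x hx
    rw [degPart, pow_one] at hx
    obtain ⟨v, rfl⟩ := hx
    rw [hcX.2]
    exact algebraMap_mem_degPart_zero _
  | succ k ih =>
    intro x hx
    rw [degPart, pow_succ'] at hx
    refine Submodule.mul_induction_on hx (fun m hm z hz => ?_) (fun a b ha hb => ?_)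
    · obtain ⟨v, rfl⟩ := hm
      have hz' : z ∈ degPart (Dual ℝ g) (k + 1) := hz
      rw [hcX.1 1 _ (ι_mem_degPart_one v) z, hcX.2, pow_one, neg_one_smul,
        ← Algebra.smul_def]
      refine Submodule.add_mem _ (Submodule.smul_mem _ _ hz') (Submodule.neg_mem _ ?_)
      have hmem := degPart_mul_mem (ι_mem_degPart_one v) (ih z hz')
      rwa [Nat.add_comm] at hmem
    · rw [map_add]
      exact Submodule.add_mem _ ha hb

lemma contraction_d_ι {n : ℕ} {b : Basis (Fin n) ℝ g}
    {d : ExteriorAlgebra ℝ (Dual ℝ g) →ₗ[ℝ] ExteriorAlgebra ℝ (Dual ℝ g)}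
    (hd : IsCEDifferential b d) {X : g}
    {cX : ExteriorAlgebra ℝ (Dual ℝ g) →ₗ[ℝ] ExteriorAlgebra ℝ (Dual ℝ g)}
    (hcX : IsContraction X cX) (hXc : ∀ Y : g, ⁅X, Y⁆ = 0) (v : Dual ℝ g) :
    cX (d (ExteriorAlgebra.ι ℝ v)) = 0 := by
  have hij : ∀ i j : Fin n,
      cX (ExteriorAlgebra.ι ℝ (b.dualBasis i) * ExteriorAlgebra.ι ℝ (b.dualBasis j))
        = (b.dualBasis i X) • ExteriorAlgebra.ι ℝ (b.dualBasis j)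
          - (b.dualBasis j X) • ExteriorAlgebra.ι ℝ (b.dualBasis i) := by
    intro i j
    rw [hcX.1 1 _ (ι_mem_degPart_one _) _, hcX.2, hcX.2, pow_one, neg_one_smul,
      ← Algebra.smul_def, ← Algebra.commutes, ← Algebra.smul_def, sub_eq_add_neg]
  have hX : ∑ i, (b.dualBasis i X) • b i = X := by
    simpa [Basis.coe_dualBasis, Basis.coord_apply] using b.sum_repr X
  have key1 : ∀ j, ∑ i, v ⁅b i, b j⁆ * (b.dualBasis i X) = 0 := by
    intro j
    have hbr : ⁅∑ i, (b.dualBasis i X) • b i, b j⁆ = ∑ i, ⁅(b.dualBasis i X) • b i, b j⁆ := by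
      exact
        map_sum (AddMonoidHom.mk' (fun x : g => ⁅x, b j⁆) fun a₁ a₂ => add_lie a₁ a₂ (b j))
          (fun i => (b.dualBasis i X) • b i) Finset.univ
    calc ∑ i, v ⁅b i, b j⁆ * (b.dualBasis i X)
        = ∑ i, v ⁅(b.dualBasis i X) • b i, b j⁆ := by
          refine Finset.sum_congr rfl fun i _ => ?_
          rw [smul_lie, map_smul, smul_eq_mul, mul_comm]
      _ = v ⁅∑ i, (b.dualBasis i X) • b i, b j⁆ := by rw [hbr, map_sum]
      _ = 0 := by rw [hX, hXc (b j), map_zero]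
  have key2 : ∀ i, ∑ j, v ⁅b i, b j⁆ * (b.dualBasis j X) = 0 := by
    intro i
    have hbr : ⁅b i, ∑ j, (b.dualBasis j X) • b j⁆ = ∑ j, ⁅b i, (b.dualBasis j X) • b j⁆ := by
      exact
        map_sum (AddMonoidHom.mk' (fun y : g => ⁅b i, y⁆) fun a₁ a₂ => lie_add (b i) a₁ a₂)
          (fun j => (b.dualBasis j X) • b j) Finset.univ
    have hbiX : ⁅b i, X⁆ = 0 := by rw [← neg_eq_zero, lie_skew, hXc]
    calc ∑ j, v ⁅b i, b j⁆ * (b.dualBasis j X)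
        = ∑ j, v ⁅b i, (b.dualBasis j X) • b j⁆ := by
          refine Finset.sum_congr rfl fun j _ => ?_
          rw [lie_smul, map_smul, smul_eq_mul, mul_comm]
      _ = v ⁅b i, ∑ j, (b.dualBasis j X) • b j⁆ := by rw [hbr, map_sum]
      _ = 0 := by rw [hX, hbiX, map_zero]
  rw [hd.2.2 v, map_smul, map_sum]
  have : ∀ i : Fin n, cX (∑ j, v ⁅b i, b j⁆ •
      (ExteriorAlgebra.ι ℝ (b.dualBasis i) * ExteriorAlgebra.ι ℝ (b.dualBasis j)))
      = ∑ j, v ⁅b i, b j⁆ • ((b.dualBasis i X) • ExteriorAlgebra.ι ℝ (b.dualBasis j)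
          - (b.dualBasis j X) • ExteriorAlgebra.ι ℝ (b.dualBasis i)) := by
    intro i
    rw [map_sum]
    exact Finset.sum_congr rfl fun j _ => by rw [map_smul, hij i j]
  rw [Finset.sum_congr rfl fun i _ => this i]
  simp only [smul_sub, smul_smul, Finset.sum_sub_distrib]
  rw [Finset.sum_comm (f := fun i j => (v ⁅b i, b j⁆ * b.dualBasis i X) •
    ExteriorAlgebra.ι ℝ (b.dualBasis j))]
  have e1 : ∀ j : Fin n, ∑ i, (v ⁅b i, b j⁆ * b.dualBasis i X) •
      ExteriorAlgebra.ι ℝ (b.dualBasis j) = 0 := by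
    intro j
    rw [← Finset.sum_smul, key1 j, zero_smul]
  have e2 : ∀ i : Fin n, ∑ j, (v ⁅b i, b j⁆ * b.dualBasis j X) •
      ExteriorAlgebra.ι ℝ (b.dualBasis i) = 0 := by
    intro i
    rw [← Finset.sum_smul, key2 i, zero_smul]
  rw [Finset.sum_congr rfl fun j _ => e1 j, Finset.sum_congr rfl fun i _ => e2 i]
  simp

lemma L_zero {n : ℕ} {b : Basis (Fin n) ℝ g}
    {d : ExteriorAlgebra ℝ (Dual ℝ g) →ₗ[ℝ] ExteriorAlgebra ℝ (Dual ℝ g)}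
    (hd : IsCEDifferential b d) {X : g}
    {cX : ExteriorAlgebra ℝ (Dual ℝ g) →ₗ[ℝ] ExteriorAlgebra ℝ (Dual ℝ g)}
    (hcX : IsContraction X cX) (hXc : ∀ Y : g, ⁅X, Y⁆ = 0) :
    ∀ k : ℕ, ∀ x ∈ degPart (Dual ℝ g) k, d (cX x) + cX (d x) = 0 := by
  intro k
  induction k with
  | zero =>
    intro x hx
    obtain ⟨r, rfl⟩ := exists_of_mem_degPart_zero hx
    rw [contraction_algebraMap hcX, d_algebraMap hd, map_zero, map_zero, add_zero]
  | succ k ih =>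
    intro x hx
    rw [degPart, pow_succ'] at hx
    refine Submodule.mul_induction_on hx (fun m hm z hz => ?_) (fun a c ha hc => ?_)
    · obtain ⟨v, rfl⟩ := hm
      have hz' : z ∈ degPart (Dual ℝ g) k := hz
      have e1 : cX (ExteriorAlgebra.ι ℝ v * z) = (v X) • z - ExteriorAlgebra.ι ℝ v * cX z := by
        rw [hcX.1 1 _ (ι_mem_degPart_one v) z, hcX.2, pow_one, neg_one_smul,
          ← Algebra.smul_def, ← sub_eq_add_neg]
      have e2 : d (ExteriorAlgebra.ι ℝ v * z)
          = d (ExteriorAlgebra.ι ℝ v) * z - ExteriorAlgebra.ι ℝ v * d z := by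
        rw [hd.2.1 1 _ (ι_mem_degPart_one v) z, pow_one, neg_one_smul, ← sub_eq_add_neg]
      have e3 : d (ExteriorAlgebra.ι ℝ v * cX z)
          = d (ExteriorAlgebra.ι ℝ v) * cX z - ExteriorAlgebra.ι ℝ v * d (cX z) := by
        rw [hd.2.1 1 _ (ι_mem_degPart_one v) (cX z), pow_one, neg_one_smul, ← sub_eq_add_neg]
      have e4 : cX (d (ExteriorAlgebra.ι ℝ v) * z)
          = d (ExteriorAlgebra.ι ℝ v) * cX z := by
        rw [hcX.1 2 _ (hd.1 1 _ (ι_mem_degPart_one v)) z, contraction_d_ι hd hcX hXc v,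
          zero_mul, zero_add]
        norm_num
      have e5 : cX (ExteriorAlgebra.ι ℝ v * d z)
          = (v X) • d z - ExteriorAlgebra.ι ℝ v * cX (d z) := by
        rw [hcX.1 1 _ (ι_mem_degPart_one v) (d z), hcX.2, pow_one, neg_one_smul,
          ← Algebra.smul_def, ← sub_eq_add_neg]
      rw [e1, e2, map_sub, map_smul, map_sub, e3, e4, e5]
      have hz0 := ih z hz'
      have hgoal : (v X) • d z - (d (ExteriorAlgebra.ι ℝ v) * cX z
            - ExteriorAlgebra.ι ℝ v * d (cX z))
          + (d (ExteriorAlgebra.ι ℝ v) * cX z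
            - ((v X) • d z - ExteriorAlgebra.ι ℝ v * cX (d z)))
          = ExteriorAlgebra.ι ℝ v * d (cX z) + ExteriorAlgebra.ι ℝ v * cX (d z) := by
        abel
      rw [hgoal, ← mul_add, hz0, mul_zero]
    · rw [map_add, map_add, map_add, map_add]
      calc d (cX a) + d (cX c) + (cX (d a) + cX (d c))
          = (d (cX a) + cX (d a)) + (d (cX c) + cX (d c)) := by abel
        _ = 0 := by rw [ha, hc, add_zero]


lemma abstract_key {A : Type*} [Ring A] [Algebra ℝ A]
    (a e w ψ dw de dψ da : A) (r : ℝ)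
    (hee : e*e = 0) (c1 : e*w = w*e) (c2 : e*a = -(a*e)) (c3 : e*dw = -(dw*e))
    (c4 : e*da = da*e) (c5 : e*de = de*e) (c6 : e*dψ = dψ*e) (c10 : w*a = a*w)
    (E2 : ψ*a = 0) (E3 : w*dψ = ψ*dw) (E4 : a*dψ = ψ*da) (E5 : a*(w*de) = -(ψ*da))
    (h3 : w*w*de = (-2:ℝ)•(ψ*dw)) :
    (a*e + r•w) * (dw*e + w*de + dψ) + (w*e + ψ) * (da*e - a*de + r•dw) = 0 := by
  have t1 : (a*e)*(dw*e) = 0 := by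
    rw [mul_assoc, ← mul_assoc e dw e, c3, neg_mul, mul_assoc dw e e, hee,
      mul_zero, neg_zero, mul_zero]
  have t2 : (a*e)*(w*de) = -((ψ*da)*e) := by
    calc (a*e)*(w*de) = a*((e*w)*de) := by rw [mul_assoc, ← mul_assoc e w de]
      _ = a*(w*(e*de)) := by rw [c1, mul_assoc]
      _ = a*((w*de)*e) := by rw [c5, ← mul_assoc w de e]
      _ = (a*(w*de))*e := by rw [← mul_assoc]
      _ = -((ψ*da)*e) := by rw [E5, neg_mul]
  have t3 : (a*e)*dψ = (ψ*da)*e := by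
    rw [mul_assoc, c6, ← mul_assoc, E4]
  have t5 : w*(w*de) = (-2:ℝ)•(ψ*dw) := by rw [← mul_assoc]; exact h3
  have t7 : (w*e)*(da*e) = 0 := by
    rw [mul_assoc, ← mul_assoc e da e, c4, mul_assoc da e e, hee, mul_zero, mul_zero]
  have t8 : (w*e)*(a*de) = (ψ*da)*e := by
    calc (w*e)*(a*de) = w*((e*a)*de) := by rw [mul_assoc, ← mul_assoc e a de]
      _ = -(w*((a*e)*de)) := by rw [c2, neg_mul, mul_neg]
      _ = -(w*(a*(de*e))) := by rw [mul_assoc a e de, c5]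
      _ = -((w*a)*(de*e)) := by rw [← mul_assoc w a (de*e)]
      _ = -((a*w)*(de*e)) := by rw [c10]
      _ = -((a*(w*de))*e) := by rw [mul_assoc a w (de*e), ← mul_assoc w de e,
            ← mul_assoc a (w*de) e]
      _ = (ψ*da)*e := by rw [E5, neg_mul, neg_neg]
  have t9 : (w*e)*dw = -(w*(dw*e)) := by rw [mul_assoc, c3, mul_neg]
  have t10 : ψ*(da*e) = (ψ*da)*e := by rw [← mul_assoc]
  have t11 : ψ*(a*de) = 0 := by rw [← mul_assoc, E2, zero_mul]
  simp only [add_mul, mul_add, mul_sub, smul_mul_assoc, mul_smul_comm]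
  rw [t1, t2, t3, t5, E3, t7, t8, t9, t10, t11]
  module


end Aux2

/-- purity part of Theorem `construction`.  Let `g` be a 7-dimensional real Lie
algebra with Chevalley–Eilenberg differential `d`, and `X` a nonzero central element.  Let
`ω ∈ Λ²g*`, `ψ₊ ∈ Λ³g*`, `η ∈ g*` with `ι_X ψ₊ = 0` and `ω ∧ ψ₊ = 0`.
If `ω ∧ ω ∧ dη = -2 ψ₊ ∧ dω`, then `φ = ω ∧ η + ψ₊` satisfies `φ ∧ dφ = 0`. -/
theorem purity_of_conditions (b : Basis (Fin 7) ℝ g)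
    (d : ExteriorAlgebra ℝ (Dual ℝ g) →ₗ[ℝ] ExteriorAlgebra ℝ (Dual ℝ g))
    (hd : IsCEDifferential b d)
    (X : g) (hX : X ≠ 0) (hXc : ∀ Y : g, ⁅X, Y⁆ = 0)
    (cX : ExteriorAlgebra ℝ (Dual ℝ g) →ₗ[ℝ] ExteriorAlgebra ℝ (Dual ℝ g))
    (hcX : IsContraction X cX)
    (ω ψp : ExteriorAlgebra ℝ (Dual ℝ g)) (η : Dual ℝ g)
    (hω : ω ∈ degPart (Dual ℝ g) 2) (hψp : ψp ∈ degPart (Dual ℝ g) 3)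
    (h1 : cX ψp = 0) (h2 : ω * ψp = 0)
    (h3 : ω * ω * d (ExteriorAlgebra.ι ℝ η) = (-2 : ℝ) • (ψp * d ω)) :
    (ω * ExteriorAlgebra.ι ℝ η + ψp) * d (ω * ExteriorAlgebra.ι ℝ η + ψp) = 0 := by
  classical
  set e : ExteriorAlgebra ℝ (Dual ℝ g) := ExteriorAlgebra.ι ℝ η with he_def
  set a : ExteriorAlgebra ℝ (Dual ℝ g) := cX ω with ha_def
  set r : ℝ := η X with hr_def
  have he : e ∈ degPart (Dual ℝ g) 1 := ι_mem_degPart_one η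
  have ha : a ∈ degPart (Dual ℝ g) 1 := contraction_degPart hcX 1 ω hω
  have hda : d a ∈ degPart (Dual ℝ g) 2 := hd.1 1 a ha
  have hde : d e ∈ degPart (Dual ℝ g) 2 := hd.1 1 e he
  have hdω : d ω ∈ degPart (Dual ℝ g) 3 := hd.1 2 ω hω
  have hdψ : d ψp ∈ degPart (Dual ℝ g) 4 := hd.1 3 ψp hψp
  have hee : e * e = 0 := ExteriorAlgebra.ι_sq_zero η
  have s2 : ((-1:ℝ))^2 = 1 := by norm_num
  have s3 : ((-1:ℝ))^3 = -1 := by norm_num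
  have s4 : ((-1:ℝ))^4 = 1 := by norm_num
  -- consequences of L_X = 0
  have hcdψ : cX (d ψp) = 0 := by
    have h := L_zero hd hcX hXc 3 ψp hψp
    rw [h1, map_zero, zero_add] at h; exact h
  have hcdω : cX (d ω) = -(d a) := by
    have h := L_zero hd hcX hXc 2 ω hω
    rw [← ha_def] at h
    rw [add_comm] at h
    exact eq_neg_of_add_eq_zero_left h
  have hce : cX e = algebraMap ℝ (ExteriorAlgebra ℝ (Dual ℝ g)) r := hcX.2 η
  have hcde : cX (d e) = 0 := by
    have h := L_zero hd hcX hXc 1 e he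
    rw [hce, d_algebraMap hd, zero_add] at h; exact h
  -- commutation facts
  have c1 : e * ω = ω * e := by
    have h := swap_ι 2 ω hω η; rw [s2, one_smul] at h; exact h
  have c2 : e * a = -(a * e) := by
    have h := swap_ι 1 a ha η; rw [pow_one, neg_one_smul] at h; exact h
  have c3 : e * d ω = -(d ω * e) := by
    have h := swap_ι 3 (d ω) hdω η; rw [s3, neg_one_smul] at h; exact h
  have c4 : e * d a = d a * e := by
    have h := swap_ι 2 (d a) hda η; rw [s2, one_smul] at h; exact h
  have c5 : e * d e = d e * e := by
    have h := swap_ι 2 (d e) hde η; rw [s2, one_smul] at h; exact h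
  have c6 : e * d ψp = d ψp * e := by
    have h := swap_ι 4 (d ψp) hdψ η; rw [s4, one_smul] at h; exact h
  have c7 : ψp * a = -(a * ψp) := by
    have h := supercomm 3 ψp hψp 1 a ha
    norm_num at h; exact h
  have c8 : d a * ψp = ψp * d a := by
    have h := supercomm 2 (d a) hda 3 ψp hψp
    norm_num at h; exact h
  have c9 : d ω * ψp = -(ψp * d ω) := by
    have h := supercomm 3 (d ω) hdω 3 ψp hψp
    norm_num at h; exact h
  have c10 : ω * a = a * ω := by
    have h := supercomm 2 ω hω 1 a ha
    norm_num at h; exact h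
  -- derived equations
  have E1 : a * ψp = 0 := by
    have h := hcX.1 2 ω hω ψp
    rw [h2, map_zero, h1, mul_zero, smul_zero, add_zero] at h
    exact h.symm
  have E2 : ψp * a = 0 := by rw [c7, E1, neg_zero]
  have E3 : ω * d ψp = ψp * d ω := by
    have h := hd.2.1 2 ω hω ψp
    rw [h2, map_zero, s2, one_smul, c9] at h
    exact (neg_add_eq_zero.mp h.symm).symm
  have E4 : a * d ψp = ψp * d a := by
    have h := hd.2.1 1 a ha ψp
    rw [E1, map_zero, pow_one, neg_one_smul, c8] at h
    exact (add_neg_eq_zero.mp h.symm).symm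
  have E5 : a * (ω * d e) = -(ψp * d a) := by
    have hωω : ω * ω ∈ degPart (Dual ℝ g) 4 := degPart_mul_mem hω hω
    have hL := congrArg cX h3
    rw [hcX.1 4 _ hωω (d e), hcde, mul_zero, smul_zero, add_zero,
      hcX.1 2 ω hω ω, s2, one_smul, c10, map_smul,
      hcX.1 3 ψp hψp (d ω), h1, zero_mul, zero_add, hcdω, s3, neg_one_smul,
      mul_neg, neg_neg] at hL
    -- hL : (a*ω + a*ω) * d e = (-2:ℝ) • (ψp * d a)
    have h2' : a * (ω * d e) + a * (ω * d e) = (-2:ℝ) • (ψp * d a) := by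
      rw [← hL, add_mul, mul_assoc]
    have hx : (2:ℝ) • (a * (ω * d e)) = (2:ℝ) • (-(ψp * d a)) := by
      rw [two_smul, h2']
      module
    exact smul_right_injective _ (two_ne_zero) hx
  -- structure of φ and dφ
  have hΦ : ω * e + ψp ∈ degPart (Dual ℝ g) 3 :=
    Submodule.add_mem _ (degPart_mul_mem hω he) hψp
  have hdΦmem : d (ω * e + ψp) ∈ degPart (Dual ℝ g) 4 := hd.1 3 _ hΦ
  have hdΦ : d (ω * e + ψp) = d ω * e + ω * d e + d ψp := by
    rw [map_add, hd.2.1 2 ω hω e, s2, one_smul]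
  have hcXΦ : cX (ω * e + ψp) = a * e + r • ω := by
    rw [map_add, h1, add_zero, hcX.1 2 ω hω e, hce, s2, one_smul,
      ← Algebra.commutes, ← Algebra.smul_def, ← ha_def]
  have hdcXΦ : d (cX (ω * e + ψp)) = d a * e - a * d e + r • d ω := by
    rw [hcXΦ, map_add, map_smul, hd.2.1 1 a ha e, pow_one, neg_one_smul, ← sub_eq_add_neg]
  have hcXdΦ : cX (d (ω * e + ψp)) = -(d a * e - a * d e + r • d ω) := by
    have h := L_zero hd hcX hXc 3 _ hΦ
    rw [hdcXΦ] at h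
    exact eq_neg_of_add_eq_zero_right h
  have key : (a*e + r•ω) * (d ω*e + ω*d e + d ψp)
      + (ω*e + ψp) * (d a*e - a*d e + r•d ω) = 0 :=
    abstract_key a e ω ψp (d ω) (d e) (d ψp) (d a) r hee c1 c2 c3 c4 c5 c6 c10 E2 E3 E4 E5 h3
  have hcXT : cX ((ω * e + ψp) * d (ω * e + ψp)) = 0 := by
    rw [hcX.1 3 _ hΦ (d (ω * e + ψp)), hcXΦ, hcXdΦ, s3, neg_one_smul, mul_neg, neg_neg,
      hdΦ]
    exact key
  -- conclude using a dual vector with φ₀ X = 1 and vanishing in degree 8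
  obtain ⟨φ₀, hφ₀⟩ : ∃ φ₀ : Dual ℝ g, φ₀ X = 1 := by
    have hne : ¬ (∀ φ : Dual ℝ g, φ X = 0) := fun h' =>
      hX ((Module.forall_dual_apply_eq_zero_iff ℝ X).1 h')
    push_neg at hne
    obtain ⟨φ, hφ⟩ := hne
    exact ⟨(φ X)⁻¹ • φ, by simp [inv_mul_cancel₀ hφ]⟩
  have hT7 : (ω * e + ψp) * d (ω * e + ψp) ∈ degPart (Dual ℝ g) 7 :=
    degPart_mul_mem hΦ hdΦmem
  have h17 : ExteriorAlgebra.ι ℝ φ₀ * ((ω * e + ψp) * d (ω * e + ψp))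
      ∈ degPart (Dual ℝ g) (1 + 7) :=
    degPart_mul_mem (ι_mem_degPart_one φ₀) hT7
  rw [Nat.add_comm] at h17
  have h8 : ExteriorAlgebra.ι ℝ φ₀ * ((ω * e + ψp) * d (ω * e + ψp)) = 0 :=
    top_vanish b.dualBasis h17
  have hfin := hcX.1 1 _ (ι_mem_degPart_one φ₀) ((ω * e + ψp) * d (ω * e + ψp))
  rw [h8, map_zero, hcX.2, hφ₀, map_one, one_mul, hcXT, mul_zero, smul_zero, add_zero] at hfin
  exact hfin.symm
end
end

section
/- The 7-dimensional indecomposable 2-step nilpotent Lie algebra 17, with basis e₁,…,e₇ and structure equations de⁷ = e^{12}+e^{34}+e^{56} (all other de^i = 0), admits a purely coclosed G2-structure: there exists a basis f¹,…,f⁷ of its dual space such that the 4-form ∗φ = f^{1234}+f^{1256}+f^{1367}+f^{1457}+f^{2357}−f^{2467}+f^{3456} is d-closed and the 3-form φ = f^{127}+f^{347}+f^{567}+f^{135}−f^{146}−f^{236}−f^{245} satisfies φ ∧ dφ = 0. (Part of Theorem '2step-indecomposable-pure' of the paper; the structure is built from ω = −e^{12}+(1/2)e^{34}−e^{56}, ψ₋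 = e^{135}+e^{146}−e^{236}+e^{245}, η = e⁷.) -/
set_option synthInstance.maxHeartbeats 1000000
set_option maxHeartbeats 1000000

open ExteriorAlgebra Module

noncomputable section

variable {g : Type*} [LieRing g] [LieAlgebra ℝ g]

/-- The 4-form `∗φ = e^{1234}+e^{1256}+e^{1367}+e^{1457}+e^{2357}-e^{2467}+e^{3456}` built out
of a family `f` of seven 1-forms (indexed from 0). -/
def starPhiForm {W : Type*} [AddCommGroup W] [Module ℝ W] (f : Fin 7 → W) :
    ExteriorAlgebra ℝ W :=
  let e : Fin 7 → ExteriorAlgebra ℝ W := fun i => ExteriorAlgebra.ι ℝ (f i)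
  e 0 * e 1 * e 2 * e 3 + e 0 * e 1 * e 4 * e 5 + e 0 * e 2 * e 5 * e 6 +
    e 0 * e 3 * e 4 * e 6 + e 1 * e 2 * e 4 * e 6 - e 1 * e 3 * e 5 * e 6 +
    e 2 * e 3 * e 4 * e 5

/-- The 3-form `φ = e^{127}+e^{347}+e^{567}+e^{135}-e^{146}-e^{236}-e^{245}` built out of a
family `f` of seven 1-forms (indexed from 0). -/
def phiG2Form {W : Type*} [AddCommGroup W] [Module ℝ W] (f : Fin 7 → W) :
    ExteriorAlgebra ℝ W :=
  let e : Fin 7 → ExteriorAlgebra ℝ W := fun i => ExteriorAlgebra.ι ℝ (f i)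
  e 0 * e 1 * e 6 + e 2 * e 3 * e 6 + e 4 * e 5 * e 6 + e 0 * e 2 * e 4 -
    e 0 * e 3 * e 5 - e 1 * e 2 * e 5 - e 1 * e 3 * e 4

/-- A 7-dimensional real Lie algebra admits a coclosed G₂-structure if there is a basis
`f¹,…,f⁷` of `g*` for which the 4-form `∗φ` is closed for the Chevalley–Eilenberg
differential. -/
def AdmitsCoclosedG2 (g : Type*) [LieRing g] [LieAlgebra ℝ g] : Prop :=
  ∃ (b : Basis (Fin 7) ℝ g)
    (d : ExteriorAlgebra ℝ (Dual ℝ g) →ₗ[ℝ] ExteriorAlgebra ℝ (Dual ℝ g)),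
    IsCEDifferential b d ∧
    ∃ f : Basis (Fin 7) ℝ (Dual ℝ g), d (starPhiForm fun i => f i) = 0

/-- A 7-dimensional real Lie algebra admits a purely coclosed G₂-structure if there is a basis
`f¹,…,f⁷` of `g*` for which `∗φ` is closed and moreover `φ ∧ dφ = 0`. -/
def AdmitsPurelyCoclosedG2 (g : Type*) [LieRing g] [LieAlgebra ℝ g] : Prop :=
  ∃ (b : Basis (Fin 7) ℝ g)
    (d : ExteriorAlgebra ℝ (Dual ℝ g) →ₗ[ℝ] ExteriorAlgebra ℝ (Dual ℝ g)),
    IsCEDifferential b d ∧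
    ∃ f : Basis (Fin 7) ℝ (Dual ℝ g),
      d (starPhiForm fun i => f i) = 0 ∧
      (phiG2Form fun i => f i) * d (phiG2Form fun i => f i) = 0

/-- A Lie algebra is decomposable if it is the direct sum of two nonzero ideals. -/
def Decomposable (g : Type*) [LieRing g] [LieAlgebra ℝ g] : Prop :=
  ∃ I J : LieIdeal ℝ g, I ≠ ⊥ ∧ J ≠ ⊥ ∧ I ⊓ J = ⊥ ∧ I ⊔ J = ⊤

/-- Shorthand for the 1-form `eⁱ` (the `i`-th dual basis vector) in `Λ g*`. -/
def ef {g : Type*} [LieRing g] [LieAlgebra ℝ g] (b : Basis (Fin 7) ℝ g) (i : Fin 7) :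
    ExteriorAlgebra ℝ (Dual ℝ g) :=
  ExteriorAlgebra.ι ℝ (b.dualBasis i)


section helpers

lemma isq' {V : Type*} [AddCommGroup V] [Module ℝ V] (α : V) (x : ExteriorAlgebra ℝ V) :
    ExteriorAlgebra.ι ℝ α * (ExteriorAlgebra.ι ℝ α * x) = 0 := by
  rw [← mul_assoc, ExteriorAlgebra.ι_sq_zero, zero_mul]

lemma iswap' {V : Type*} [AddCommGroup V] [Module ℝ V] (α β : V) :
    ExteriorAlgebra.ι ℝ β * ExteriorAlgebra.ι ℝ α =
      -(ExteriorAlgebra.ι ℝ α * ExteriorAlgebra.ι ℝ β) := by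
  exact eq_neg_of_add_eq_zero_left (ExteriorAlgebra.ι_add_mul_swap β α)

lemma iswap {V : Type*} [AddCommGroup V] [Module ℝ V] (α β : V) (x : ExteriorAlgebra ℝ V) :
    ExteriorAlgebra.ι ℝ β * (ExteriorAlgebra.ι ℝ α * x) =
      -(ExteriorAlgebra.ι ℝ α * (ExteriorAlgebra.ι ℝ β * x)) := by
  rw [← mul_assoc, iswap', neg_mul, mul_assoc]

lemma mem_degPart_one {V : Type*} [AddCommGroup V] [Module ℝ V] (α : V) :
    ExteriorAlgebra.ι ℝ α ∈ degPart V 1 := by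
  rw [degPart, pow_one]; exact LinearMap.mem_range_self _ α

lemma d_ι_mul {g : Type*} [LieRing g] [LieAlgebra ℝ g] {b : Basis (Fin 7) ℝ g}
    {d : ExteriorAlgebra ℝ (Dual ℝ g) →ₗ[ℝ] ExteriorAlgebra ℝ (Dual ℝ g)}
    (hd : IsCEDifferential b d) (α : Dual ℝ g) (h0 : d (ExteriorAlgebra.ι ℝ α) = 0)
    (y : ExteriorAlgebra ℝ (Dual ℝ g)) :
    d (ExteriorAlgebra.ι ℝ α * y) = -(ExteriorAlgebra.ι ℝ α * d y) := by
  have h := hd.2.1 1 _ (mem_degPart_one α) y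
  rw [h, h0, zero_mul, zero_add, pow_one, neg_smul, one_smul]

def u5unit : ℝˣ := ⟨-(2⁻¹ : ℝ), -2, by norm_num, by norm_num⟩

end helpers

set_option maxHeartbeats 8000000

/-- The Lie algebra `17` (`de⁷ = e^{12} + e^{34} + e^{56}`, all other
`deⁱ = 0`) admits a purely coclosed G₂-structure: there is a basis `f¹,…,f⁷` of its dual space
with `d(∗φ) = 0` and `φ ∧ dφ = 0`. -/
theorem lie17_purely_coclosed
    (b : Basis (Fin 7) ℝ g)
    (d : ExteriorAlgebra ℝ (Dual ℝ g) →ₗ[ℝ] ExteriorAlgebra ℝ (Dual ℝ g))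
    (hd : IsCEDifferential b d)
    (hzero : ∀ i : Fin 7, i ≤ 5 → d (ef b i) = 0)
    (h7 : d (ef b 6) = ef b 0 * ef b 1 + ef b 2 * ef b 3 + ef b 4 * ef b 5) :
    ∃ f : Basis (Fin 7) ℝ (Dual ℝ g),
      d (starPhiForm fun i => f i) = 0 ∧
      (phiG2Form fun i => f i) * d (phiG2Form fun i => f i) = 0 := by
  classical
  have dz0 : d (ef b 0) = 0 := hzero 0 (by decide)
  have dz1 : d (ef b 1) = 0 := hzero 1 (by decide)
  have dz2 : d (ef b 2) = 0 := hzero 2 (by decide)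
  have dz3 : d (ef b 3) = 0 := hzero 3 (by decide)
  have dz4 : d (ef b 4) = 0 := hzero 4 (by decide)
  have dz5 : d (ef b 5) = 0 := hzero 5 (by decide)
  have dm0 : ∀ y, d (ef b 0 * y) = -(ef b 0 * d y) := fun y => d_ι_mul hd _ dz0 y
  have dm1 : ∀ y, d (ef b 1 * y) = -(ef b 1 * d y) := fun y => d_ι_mul hd _ dz1 y
  have dm2 : ∀ y, d (ef b 2 * y) = -(ef b 2 * d y) := fun y => d_ι_mul hd _ dz2 y
  have dm3 : ∀ y, d (ef b 3 * y) = -(ef b 3 * d y) := fun y => d_ι_mul hd _ dz3 y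
  have dm4 : ∀ y, d (ef b 4 * y) = -(ef b 4 * d y) := fun y => d_ι_mul hd _ dz4 y
  have dm5 : ∀ y, d (ef b 5 * y) = -(ef b 5 * d y) := fun y => d_ι_mul hd _ dz5 y
  have s01 : ∀ x, ef b 1 * (ef b 0 * x) = -(ef b 0 * (ef b 1 * x)) := fun x => iswap _ _ x
  have t01 : ef b 1 * ef b 0 = -(ef b 0 * ef b 1) := iswap' _ _
  have s02 : ∀ x, ef b 2 * (ef b 0 * x) = -(ef b 0 * (ef b 2 * x)) := fun x => iswap _ _ x
  have t02 : ef b 2 * ef b 0 = -(ef b 0 * ef b 2) := iswap' _ _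
  have s03 : ∀ x, ef b 3 * (ef b 0 * x) = -(ef b 0 * (ef b 3 * x)) := fun x => iswap _ _ x
  have t03 : ef b 3 * ef b 0 = -(ef b 0 * ef b 3) := iswap' _ _
  have s04 : ∀ x, ef b 4 * (ef b 0 * x) = -(ef b 0 * (ef b 4 * x)) := fun x => iswap _ _ x
  have t04 : ef b 4 * ef b 0 = -(ef b 0 * ef b 4) := iswap' _ _
  have s05 : ∀ x, ef b 5 * (ef b 0 * x) = -(ef b 0 * (ef b 5 * x)) := fun x => iswap _ _ x
  have t05 : ef b 5 * ef b 0 = -(ef b 0 * ef b 5) := iswap' _ _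
  have s06 : ∀ x, ef b 6 * (ef b 0 * x) = -(ef b 0 * (ef b 6 * x)) := fun x => iswap _ _ x
  have t06 : ef b 6 * ef b 0 = -(ef b 0 * ef b 6) := iswap' _ _
  have s12 : ∀ x, ef b 2 * (ef b 1 * x) = -(ef b 1 * (ef b 2 * x)) := fun x => iswap _ _ x
  have t12 : ef b 2 * ef b 1 = -(ef b 1 * ef b 2) := iswap' _ _
  have s13 : ∀ x, ef b 3 * (ef b 1 * x) = -(ef b 1 * (ef b 3 * x)) := fun x => iswap _ _ x
  have t13 : ef b 3 * ef b 1 = -(ef b 1 * ef b 3) := iswap' _ _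
  have s14 : ∀ x, ef b 4 * (ef b 1 * x) = -(ef b 1 * (ef b 4 * x)) := fun x => iswap _ _ x
  have t14 : ef b 4 * ef b 1 = -(ef b 1 * ef b 4) := iswap' _ _
  have s15 : ∀ x, ef b 5 * (ef b 1 * x) = -(ef b 1 * (ef b 5 * x)) := fun x => iswap _ _ x
  have t15 : ef b 5 * ef b 1 = -(ef b 1 * ef b 5) := iswap' _ _
  have s16 : ∀ x, ef b 6 * (ef b 1 * x) = -(ef b 1 * (ef b 6 * x)) := fun x => iswap _ _ x
  have t16 : ef b 6 * ef b 1 = -(ef b 1 * ef b 6) := iswap' _ _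
  have s23 : ∀ x, ef b 3 * (ef b 2 * x) = -(ef b 2 * (ef b 3 * x)) := fun x => iswap _ _ x
  have t23 : ef b 3 * ef b 2 = -(ef b 2 * ef b 3) := iswap' _ _
  have s24 : ∀ x, ef b 4 * (ef b 2 * x) = -(ef b 2 * (ef b 4 * x)) := fun x => iswap _ _ x
  have t24 : ef b 4 * ef b 2 = -(ef b 2 * ef b 4) := iswap' _ _
  have s25 : ∀ x, ef b 5 * (ef b 2 * x) = -(ef b 2 * (ef b 5 * x)) := fun x => iswap _ _ x
  have t25 : ef b 5 * ef b 2 = -(ef b 2 * ef b 5) := iswap' _ _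
  have s26 : ∀ x, ef b 6 * (ef b 2 * x) = -(ef b 2 * (ef b 6 * x)) := fun x => iswap _ _ x
  have t26 : ef b 6 * ef b 2 = -(ef b 2 * ef b 6) := iswap' _ _
  have s34 : ∀ x, ef b 4 * (ef b 3 * x) = -(ef b 3 * (ef b 4 * x)) := fun x => iswap _ _ x
  have t34 : ef b 4 * ef b 3 = -(ef b 3 * ef b 4) := iswap' _ _
  have s35 : ∀ x, ef b 5 * (ef b 3 * x) = -(ef b 3 * (ef b 5 * x)) := fun x => iswap _ _ x
  have t35 : ef b 5 * ef b 3 = -(ef b 3 * ef b 5) := iswap' _ _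
  have s36 : ∀ x, ef b 6 * (ef b 3 * x) = -(ef b 3 * (ef b 6 * x)) := fun x => iswap _ _ x
  have t36 : ef b 6 * ef b 3 = -(ef b 3 * ef b 6) := iswap' _ _
  have s45 : ∀ x, ef b 5 * (ef b 4 * x) = -(ef b 4 * (ef b 5 * x)) := fun x => iswap _ _ x
  have t45 : ef b 5 * ef b 4 = -(ef b 4 * ef b 5) := iswap' _ _
  have s46 : ∀ x, ef b 6 * (ef b 4 * x) = -(ef b 4 * (ef b 6 * x)) := fun x => iswap _ _ x
  have t46 : ef b 6 * ef b 4 = -(ef b 4 * ef b 6) := iswap' _ _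
  have s56 : ∀ x, ef b 6 * (ef b 5 * x) = -(ef b 5 * (ef b 6 * x)) := fun x => iswap _ _ x
  have t56 : ef b 6 * ef b 5 = -(ef b 5 * ef b 6) := iswap' _ _
  have q0 : ef b 0 * ef b 0 = 0 := ExteriorAlgebra.ι_sq_zero _
  have q0p : ∀ x, ef b 0 * (ef b 0 * x) = 0 := fun x => isq' _ x
  have q1 : ef b 1 * ef b 1 = 0 := ExteriorAlgebra.ι_sq_zero _
  have q1p : ∀ x, ef b 1 * (ef b 1 * x) = 0 := fun x => isq' _ x
  have q2 : ef b 2 * ef b 2 = 0 := ExteriorAlgebra.ι_sq_zero _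
  have q2p : ∀ x, ef b 2 * (ef b 2 * x) = 0 := fun x => isq' _ x
  have q3 : ef b 3 * ef b 3 = 0 := ExteriorAlgebra.ι_sq_zero _
  have q3p : ∀ x, ef b 3 * (ef b 3 * x) = 0 := fun x => isq' _ x
  have q4 : ef b 4 * ef b 4 = 0 := ExteriorAlgebra.ι_sq_zero _
  have q4p : ∀ x, ef b 4 * (ef b 4 * x) = 0 := fun x => isq' _ x
  have q5 : ef b 5 * ef b 5 = 0 := ExteriorAlgebra.ι_sq_zero _
  have q5p : ∀ x, ef b 5 * (ef b 5 * x) = 0 := fun x => isq' _ x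
  have q6 : ef b 6 * ef b 6 = 0 := ExteriorAlgebra.ι_sq_zero _
  have q6p : ∀ x, ef b 6 * (ef b 6 * x) = 0 := fun x => isq' _ x
  refine ⟨b.dualBasis.unitsSMul (fun i => if i = 5 then u5unit else 1), ?_, ?_⟩
  · have hF : ∀ i, ExteriorAlgebra.ι ℝ ((b.dualBasis.unitsSMul (fun i => if i = 5 then u5unit else 1)) i) = (((if i = 5 then u5unit else 1) : ℝˣ) : ℝ) • ef b i := by
      intro i
      rw [Basis.unitsSMul_apply, Units.smul_def, map_smul]
      rfl
    have hF0 : ExteriorAlgebra.ι ℝ ((b.dualBasis.unitsSMul (fun i => if i = 5 then u5unit else 1)) 0) = ef b 0 := by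
      rw [hF 0, if_neg (by decide), Units.val_one, one_smul]
    have hF1 : ExteriorAlgebra.ι ℝ ((b.dualBasis.unitsSMul (fun i => if i = 5 then u5unit else 1)) 1) = ef b 1 := by
      rw [hF 1, if_neg (by decide), Units.val_one, one_smul]
    have hF2 : ExteriorAlgebra.ι ℝ ((b.dualBasis.unitsSMul (fun i => if i = 5 then u5unit else 1)) 2) = ef b 2 := by
      rw [hF 2, if_neg (by decide), Units.val_one, one_smul]
    have hF3 : ExteriorAlgebra.ι ℝ ((b.dualBasis.unitsSMul (fun i => if i = 5 then u5unit else 1)) 3) = ef b 3 := by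
      rw [hF 3, if_neg (by decide), Units.val_one, one_smul]
    have hF4 : ExteriorAlgebra.ι ℝ ((b.dualBasis.unitsSMul (fun i => if i = 5 then u5unit else 1)) 4) = ef b 4 := by
      rw [hF 4, if_neg (by decide), Units.val_one, one_smul]
    have hF5 : ExteriorAlgebra.ι ℝ ((b.dualBasis.unitsSMul (fun i => if i = 5 then u5unit else 1)) 5) = (-(2⁻¹:ℝ)) • ef b 5 := by
      rw [hF 5, if_pos rfl]; rfl
    have hF6 : ExteriorAlgebra.ι ℝ ((b.dualBasis.unitsSMul (fun i => if i = 5 then u5unit else 1)) 6) = ef b 6 := by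
      rw [hF 6, if_neg (by decide), Units.val_one, one_smul]
    simp only [starPhiForm, hF0, hF1, hF2, hF3, hF4, hF5, hF6, smul_mul_assoc, mul_smul_comm, mul_assoc]
    simp only [map_add, map_sub, map_smul, dm0, dm1, dm2, dm3, dm4, dm5, dz0, dz1, dz2, dz3, dz4, dz5, h7]
    simp only [mul_add, mul_neg, neg_neg, mul_zero, smul_zero, neg_zero, add_zero, zero_add,
      smul_neg, smul_add,
      s01, t01, s02, t02, s03, t03, s04, t04, s05, t05, s06, t06, s12, t12, s13, t13, s14, t14, s15, t15, s16, t16, s23, t23, s24, t24, s25, t25, s26, t26, s34, t34, s35, t35, s36, t36, s45, t45, s46, t46, s56, t56,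
      q0, q0p, q1, q1p, q2, q2p, q3, q3p, q4, q4p, q5, q5p, q6, q6p, sub_zero, zero_sub, zero_mul]
  · have hF : ∀ i, ExteriorAlgebra.ι ℝ ((b.dualBasis.unitsSMul (fun i => if i = 5 then u5unit else 1)) i) = (((if i = 5 then u5unit else 1) : ℝˣ) : ℝ) • ef b i := by
      intro i
      rw [Basis.unitsSMul_apply, Units.smul_def, map_smul]
      rfl
    have hF0 : ExteriorAlgebra.ι ℝ ((b.dualBasis.unitsSMul (fun i => if i = 5 then u5unit else 1)) 0) = ef b 0 := by
      rw [hF 0, if_neg (by decide), Units.val_one, one_smul]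
    have hF1 : ExteriorAlgebra.ι ℝ ((b.dualBasis.unitsSMul (fun i => if i = 5 then u5unit else 1)) 1) = ef b 1 := by
      rw [hF 1, if_neg (by decide), Units.val_one, one_smul]
    have hF2 : ExteriorAlgebra.ι ℝ ((b.dualBasis.unitsSMul (fun i => if i = 5 then u5unit else 1)) 2) = ef b 2 := by
      rw [hF 2, if_neg (by decide), Units.val_one, one_smul]
    have hF3 : ExteriorAlgebra.ι ℝ ((b.dualBasis.unitsSMul (fun i => if i = 5 then u5unit else 1)) 3) = ef b 3 := by
      rw [hF 3, if_neg (by decide), Units.val_one, one_smul]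
    have hF4 : ExteriorAlgebra.ι ℝ ((b.dualBasis.unitsSMul (fun i => if i = 5 then u5unit else 1)) 4) = ef b 4 := by
      rw [hF 4, if_neg (by decide), Units.val_one, one_smul]
    have hF5 : ExteriorAlgebra.ι ℝ ((b.dualBasis.unitsSMul (fun i => if i = 5 then u5unit else 1)) 5) = (-(2⁻¹:ℝ)) • ef b 5 := by
      rw [hF 5, if_pos rfl]; rfl
    have hF6 : ExteriorAlgebra.ι ℝ ((b.dualBasis.unitsSMul (fun i => if i = 5 then u5unit else 1)) 6) = ef b 6 := by
      rw [hF 6, if_neg (by decide), Units.val_one, one_smul]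
    simp only [phiG2Form, hF0, hF1, hF2, hF3, hF4, hF5, hF6, smul_mul_assoc, mul_smul_comm, mul_assoc]
    simp only [map_add, map_sub, map_smul, dm0, dm1, dm2, dm3, dm4, dm5, dz0, dz1, dz2, dz3, dz4, dz5, h7]
    simp only [mul_add, add_mul, mul_sub, sub_mul, mul_neg, neg_mul, smul_add, smul_sub,
      smul_neg, smul_smul, smul_mul_assoc, mul_smul_comm, mul_assoc, neg_neg]
    simp only [mul_neg, neg_neg, mul_zero, smul_zero, neg_zero, add_zero, zero_add,
      smul_neg, sub_zero, zero_sub,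
      s01, t01, s02, t02, s03, t03, s04, t04, s05, t05, s06, t06, s12, t12, s13, t13, s14, t14, s15, t15, s16, t16, s23, t23, s24, t24, s25, t25, s26, t26, s34, t34, s35, t35, s36, t36, s45, t45, s46, t46, s56, t56,
      q0, q0p, q1, q1p, q2, q2p, q3, q3p, q4, q4p, q5, q5p, q6, q6p, zero_mul]
    module
end
end

section
/- The 7-dimensional indecomposable 2-step nilpotent Lie algebra 37B, with basis e₁,…,e₇ and structure equations de⁵ = e^{12}, de⁶ = e^{23}, de⁷ = e^{34} (all other de^i = 0), admits a purely coclosed G2-structure: there exists a basis f¹,…,f⁷ of its dual space such that the 4-form ∗φ = f^{1234}+f^{1256}+f^{1367}+f^{1457}+f^{2357}−f^{2467}+f^{3456} is d-closed and the 3-form φ = f^{127}+f^{347}+f^{567}+f^{135}−f^{146}−f^{236}−f^{245} satisfies φ ∧ dφ = 0. (Worked Example of the paper; the structure is built from ω = e^{13}+e^{24}−e^{67}, ψ₋ = e^{127}−e^{146}+e^{236}−e^{347}, ψ₊ = e^{126}+e^{147}−e^{346}−e^{237}, η = e⁵+e⁷, via φ = ω∧η+ψ₊.) -/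
set_option synthInstance.maxHeartbeats 1000000
set_option maxHeartbeats 1000000

open ExteriorAlgebra Module

noncomputable section

variable {g : Type*} [LieRing g] [LieAlgebra ℝ g]

/- ### auxiliary lemmas -/

lemma ef_sq (b : Basis (Fin 7) ℝ g) (i : Fin 7) : ef b i * ef b i = 0 :=
  ExteriorAlgebra.ι_sq_zero _

lemma ef_sq' (b : Basis (Fin 7) ℝ g) (i : Fin 7) (x : ExteriorAlgebra ℝ (Dual ℝ g)) :
    ef b i * (ef b i * x) = 0 := by
  rw [← mul_assoc, ef_sq, zero_mul]

lemma ef_swap (b : Basis (Fin 7) ℝ g) {i j : Fin 7} (_h : j < i) :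
    ef b i * ef b j = -(ef b j * ef b i) :=
  eq_neg_of_add_eq_zero_left (ExteriorAlgebra.ι_add_mul_swap _ _)

lemma ef_swap' (b : Basis (Fin 7) ℝ g) {i j : Fin 7} (h : j < i)
    (x : ExteriorAlgebra ℝ (Dual ℝ g)) :
    ef b i * (ef b j * x) = -(ef b j * (ef b i * x)) := by
  rw [← mul_assoc, ef_swap b h, neg_mul, mul_assoc]

lemma d_ef_mul (b : Basis (Fin 7) ℝ g)
    (d : ExteriorAlgebra ℝ (Dual ℝ g) →ₗ[ℝ] ExteriorAlgebra ℝ (Dual ℝ g))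
    (hd : IsCEDifferential b d) (i : Fin 7) (y : ExteriorAlgebra ℝ (Dual ℝ g)) :
    d (ef b i * y) = d (ef b i) * y - ef b i * d y := by
  have h1 : ef b i ∈ degPart (Dual ℝ g) 1 := by
    rw [degPart, pow_one]; exact ⟨_, rfl⟩
  have := hd.2.1 1 _ h1 y
  simpa [sub_eq_add_neg] using this

def myV (b : Basis (Fin 7) ℝ g) : Fin 7 → Dual ℝ g :=
  ![b.dualBasis 0, b.dualBasis 2, b.dualBasis 1, b.dualBasis 3,
    b.dualBasis 5, -b.dualBasis 6, b.dualBasis 4 + b.dualBasis 6]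

def myW (b : Basis (Fin 7) ℝ g) : Fin 7 → Dual ℝ g :=
  ![b.dualBasis 0, b.dualBasis 2, b.dualBasis 1, b.dualBasis 3,
    b.dualBasis 5 + b.dualBasis 6, b.dualBasis 4, -b.dualBasis 5]

lemma comp_vw (b : Basis (Fin 7) ℝ g) :
    ((b.dualBasis.constr ℝ (myV b)).comp (b.dualBasis.constr ℝ (myW b))) = LinearMap.id := by
  have h0 : (b.dualBasis.constr ℝ (myV b)) ((b.dualBasis.constr ℝ (myW b)) (b.dualBasis 0))
      = b.dualBasis 0 := by
    rw [Basis.constr_basis]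
    show (b.dualBasis.constr ℝ (myV b)) (b.dualBasis 0) = _
    rw [Basis.constr_basis]; rfl
  have h1 : (b.dualBasis.constr ℝ (myV b)) ((b.dualBasis.constr ℝ (myW b)) (b.dualBasis 1))
      = b.dualBasis 1 := by
    rw [Basis.constr_basis]
    show (b.dualBasis.constr ℝ (myV b)) (b.dualBasis 2) = _
    rw [Basis.constr_basis]; rfl
  have h2 : (b.dualBasis.constr ℝ (myV b)) ((b.dualBasis.constr ℝ (myW b)) (b.dualBasis 2))
      = b.dualBasis 2 := by
    rw [Basis.constr_basis]
    show (b.dualBasis.constr ℝ (myV b)) (b.dualBasis 1) = _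
    rw [Basis.constr_basis]; rfl
  have h3 : (b.dualBasis.constr ℝ (myV b)) ((b.dualBasis.constr ℝ (myW b)) (b.dualBasis 3))
      = b.dualBasis 3 := by
    rw [Basis.constr_basis]
    show (b.dualBasis.constr ℝ (myV b)) (b.dualBasis 3) = _
    rw [Basis.constr_basis]; rfl
  have h4 : (b.dualBasis.constr ℝ (myV b)) ((b.dualBasis.constr ℝ (myW b)) (b.dualBasis 4))
      = b.dualBasis 4 := by
    rw [Basis.constr_basis]
    show (b.dualBasis.constr ℝ (myV b)) (b.dualBasis 5 + b.dualBasis 6) = _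
    rw [map_add, Basis.constr_basis, Basis.constr_basis]
    show -b.dualBasis 6 + (b.dualBasis 4 + b.dualBasis 6) = _
    abel
  have h5 : (b.dualBasis.constr ℝ (myV b)) ((b.dualBasis.constr ℝ (myW b)) (b.dualBasis 5))
      = b.dualBasis 5 := by
    rw [Basis.constr_basis]
    show (b.dualBasis.constr ℝ (myV b)) (b.dualBasis 4) = _
    rw [Basis.constr_basis]; rfl
  have h6 : (b.dualBasis.constr ℝ (myV b)) ((b.dualBasis.constr ℝ (myW b)) (b.dualBasis 6))
      = b.dualBasis 6 := by
    rw [Basis.constr_basis]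
    show (b.dualBasis.constr ℝ (myV b)) (-b.dualBasis 5) = _
    rw [map_neg, Basis.constr_basis]
    show -(-b.dualBasis 6) = _
    exact neg_neg _
  apply b.dualBasis.ext
  intro i
  fin_cases i
  · exact h0
  · exact h1
  · exact h2
  · exact h3
  · exact h4
  · exact h5
  · exact h6

lemma comp_wv (b : Basis (Fin 7) ℝ g) :
    ((b.dualBasis.constr ℝ (myW b)).comp (b.dualBasis.constr ℝ (myV b))) = LinearMap.id := by
  have h0 : (b.dualBasis.constr ℝ (myW b)) ((b.dualBasis.constr ℝ (myV b)) (b.dualBasis 0))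
      = b.dualBasis 0 := by
    rw [Basis.constr_basis]
    show (b.dualBasis.constr ℝ (myW b)) (b.dualBasis 0) = _
    rw [Basis.constr_basis]; rfl
  have h1 : (b.dualBasis.constr ℝ (myW b)) ((b.dualBasis.constr ℝ (myV b)) (b.dualBasis 1))
      = b.dualBasis 1 := by
    rw [Basis.constr_basis]
    show (b.dualBasis.constr ℝ (myW b)) (b.dualBasis 2) = _
    rw [Basis.constr_basis]; rfl
  have h2 : (b.dualBasis.constr ℝ (myW b)) ((b.dualBasis.constr ℝ (myV b)) (b.dualBasis 2))
      = b.dualBasis 2 := by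
    rw [Basis.constr_basis]
    show (b.dualBasis.constr ℝ (myW b)) (b.dualBasis 1) = _
    rw [Basis.constr_basis]; rfl
  have h3 : (b.dualBasis.constr ℝ (myW b)) ((b.dualBasis.constr ℝ (myV b)) (b.dualBasis 3))
      = b.dualBasis 3 := by
    rw [Basis.constr_basis]
    show (b.dualBasis.constr ℝ (myW b)) (b.dualBasis 3) = _
    rw [Basis.constr_basis]; rfl
  have h4 : (b.dualBasis.constr ℝ (myW b)) ((b.dualBasis.constr ℝ (myV b)) (b.dualBasis 4))
      = b.dualBasis 4 := by
    rw [Basis.constr_basis]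
    show (b.dualBasis.constr ℝ (myW b)) (b.dualBasis 5) = _
    rw [Basis.constr_basis]; rfl
  have h5 : (b.dualBasis.constr ℝ (myW b)) ((b.dualBasis.constr ℝ (myV b)) (b.dualBasis 5))
      = b.dualBasis 5 := by
    rw [Basis.constr_basis]
    show (b.dualBasis.constr ℝ (myW b)) (-b.dualBasis 6) = _
    rw [map_neg, Basis.constr_basis]
    show -(-b.dualBasis 5) = _
    exact neg_neg _
  have h6 : (b.dualBasis.constr ℝ (myW b)) ((b.dualBasis.constr ℝ (myV b)) (b.dualBasis 6))
      = b.dualBasis 6 := by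
    rw [Basis.constr_basis]
    show (b.dualBasis.constr ℝ (myW b)) (b.dualBasis 4 + b.dualBasis 6) = _
    rw [map_add, Basis.constr_basis, Basis.constr_basis]
    show b.dualBasis 5 + b.dualBasis 6 + -b.dualBasis 5 = _
    abel
  apply b.dualBasis.ext
  intro i
  fin_cases i
  · exact h0
  · exact h1
  · exact h2
  · exact h3
  · exact h4
  · exact h5
  · exact h6

def myE (b : Basis (Fin 7) ℝ g) : Dual ℝ g ≃ₗ[ℝ] Dual ℝ g :=
  LinearEquiv.ofLinear (b.dualBasis.constr ℝ (myV b)) (b.dualBasis.constr ℝ (myW b))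
    (comp_vw b) (comp_wv b)

def myF (b : Basis (Fin 7) ℝ g) : Basis (Fin 7) ℝ (Dual ℝ g) :=
  b.dualBasis.map (myE b)

lemma myF_apply (b : Basis (Fin 7) ℝ g) (i : Fin 7) : myF b i = myV b i := by
  rw [myF, Basis.map_apply, myE, LinearEquiv.ofLinear_apply, Basis.constr_basis]

lemma K0 (b : Basis (Fin 7) ℝ g) : ExteriorAlgebra.ι ℝ (myF b 0) = ef b 0 := by
  rw [myF_apply]; rfl
lemma K1 (b : Basis (Fin 7) ℝ g) : ExteriorAlgebra.ι ℝ (myF b 1) = ef b 2 := by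
  rw [myF_apply]; rfl
lemma K2 (b : Basis (Fin 7) ℝ g) : ExteriorAlgebra.ι ℝ (myF b 2) = ef b 1 := by
  rw [myF_apply]; rfl
lemma K3 (b : Basis (Fin 7) ℝ g) : ExteriorAlgebra.ι ℝ (myF b 3) = ef b 3 := by
  rw [myF_apply]; rfl
lemma K4 (b : Basis (Fin 7) ℝ g) : ExteriorAlgebra.ι ℝ (myF b 4) = ef b 5 := by
  rw [myF_apply]; rfl
lemma K5 (b : Basis (Fin 7) ℝ g) : ExteriorAlgebra.ι ℝ (myF b 5) = -ef b 6 := by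
  rw [myF_apply]
  show ExteriorAlgebra.ι ℝ (-b.dualBasis 6) = _
  rw [map_neg]; rfl
lemma K6 (b : Basis (Fin 7) ℝ g) : ExteriorAlgebra.ι ℝ (myF b 6) = ef b 4 + ef b 6 := by
  rw [myF_apply]
  show ExteriorAlgebra.ι ℝ (b.dualBasis 4 + b.dualBasis 6) = _
  rw [map_add]; rfl


/-- The Lie algebra `37B` (`de⁵ = e^{12}`, `de⁶ = e^{23}`, `de⁷ = e^{34}`,
all other `deⁱ = 0`) admits a purely coclosed G₂-structure: there is a basis `f¹,…,f⁷` of its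
dual space with `d(∗φ) = 0` and `φ ∧ dφ = 0`. -/
theorem lie37B_purely_coclosed
    (b : Basis (Fin 7) ℝ g)
    (d : ExteriorAlgebra ℝ (Dual ℝ g) →ₗ[ℝ] ExteriorAlgebra ℝ (Dual ℝ g))
    (hd : IsCEDifferential b d)
    (hzero : ∀ i : Fin 7, i ≤ 3 → d (ef b i) = 0)
    (h5 : d (ef b 4) = ef b 0 * ef b 1)
    (h6 : d (ef b 5) = ef b 1 * ef b 2)
    (h7 : d (ef b 6) = ef b 2 * ef b 3) :
    ∃ f : Basis (Fin 7) ℝ (Dual ℝ g),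
      d (starPhiForm fun i => f i) = 0 ∧
      (phiG2Form fun i => f i) * d (phiG2Form fun i => f i) = 0 := by
  have d0 : d (ef b 0) = 0 := hzero 0 (by decide)
  have d1 : d (ef b 1) = 0 := hzero 1 (by decide)
  have d2 : d (ef b 2) = 0 := hzero 2 (by decide)
  have d3 : d (ef b 3) = 0 := hzero 3 (by decide)
  have hder : ∀ (i : Fin 7) y, d (ef b i * y) = d (ef b i) * y - ef b i * d y :=
    d_ef_mul b d hd
  refine ⟨myF b, ?_, ?_⟩
  · simp only [starPhiForm, K0, K1, K2, K3, K4, K5, K6]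
    simp (config := { decide := true }) only [mul_add, add_mul, mul_neg, neg_mul, mul_sub,
      sub_mul, mul_assoc, map_add, map_sub, map_neg, hder, d0, d1, d2, d3, h5, h6, h7,
      zero_mul, mul_zero, zero_sub, sub_zero, add_zero, zero_add, neg_zero, neg_neg,
      ef_sq, ef_sq', ef_swap', ef_swap]
    try abel
  · simp only [phiG2Form, K0, K1, K2, K3, K4, K5, K6]
    simp (config := { decide := true }) only [mul_add, add_mul, mul_neg, neg_mul, mul_sub,
      sub_mul, mul_assoc, map_add, map_sub, map_neg, hder, d0, d1, d2, d3, h5, h6, h7,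
      zero_mul, mul_zero, zero_sub, sub_zero, add_zero, zero_add, neg_zero, neg_neg,
      ef_sq, ef_sq', ef_swap', ef_swap]
    try abel
end
end

section
/- For every real number λ with λ ≠ 0 and λ ≠ 1, the 7-dimensional indecomposable 3-step nilpotent Lie algebra 147E(λ), with basis e₁,…,e₇ and structure equations de⁴ = e^{12}, de⁵ = e^{23}, de⁶ = −e^{13}, de⁷ = −e^{15}+λ·e^{26}+(1−λ)·e^{34} (all other de^i = 0), admits a purely coclosed G2-structure: there exists a basis f¹,…,f⁷ of its dual space such that the 4-form ∗φ = f^{1234}+f^{1256}+f^{1367}+f^{1457}+f^{2357}−f^{2467}+f^{3456} is d-closed and the 3-form φ = f^{127}+f^{347}+f^{567}+f^{135}−f^{146}−f^{236}−f^{245} satisfies φ ∧ dφ = 0. (Part of Theorem '3step-indecomposable-pure' of the paper; the structure is built from ω = e^{13}−e^{26}−e^{34}+e^{45} and ψ₋ = −e^{123}−2e^{125}−e^{146}+e^{245}+e^{356}.) -/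
set_option synthInstance.maxHeartbeats 1000000
set_option maxHeartbeats 1000000

open ExteriorAlgebra Module

noncomputable section

variable {g : Type*} [LieRing g] [LieAlgebra ℝ g]

section AuxG2
variable {W : Type*} [AddCommGroup W] [Module ℝ W]

private lemma iswap_s19 (x y : W) :
    ExteriorAlgebra.ι ℝ y * ExteriorAlgebra.ι ℝ x
      = -(ExteriorAlgebra.ι ℝ x * ExteriorAlgebra.ι ℝ y) :=
  eq_neg_of_add_eq_zero_left (ExteriorAlgebra.ι_add_mul_swap y x)

private lemma iswap'_s19 (x y : W) (z : ExteriorAlgebra ℝ W) :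
    ExteriorAlgebra.ι ℝ y * (ExteriorAlgebra.ι ℝ x * z)
      = -(ExteriorAlgebra.ι ℝ x * (ExteriorAlgebra.ι ℝ y * z)) := by
  rw [← mul_assoc, iswap_s19, neg_mul, mul_assoc]

private lemma isq'_s19 (x : W) (z : ExteriorAlgebra ℝ W) :
    ExteriorAlgebra.ι ℝ x * (ExteriorAlgebra.ι ℝ x * z) = 0 := by
  rw [← mul_assoc, ExteriorAlgebra.ι_sq_zero, zero_mul]

set_option maxHeartbeats 4000000 in
private lemma calcA {W : Type*} [AddCommGroup W] [Module ℝ W]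
    (lam t : ℝ) (ht : t * (lam - 1) = 5)
    (w : Fin 7 → W) (d : ExteriorAlgebra ℝ W →ₗ[ℝ] ExteriorAlgebra ℝ W)
    (hleib : ∀ (α : W) (y : ExteriorAlgebra ℝ W),
      d (ι ℝ α * y) = d (ι ℝ α) * y - ι ℝ α * d y)
    (h1 : d (ι ℝ (w 0)) = 0) (h2 : d (ι ℝ (w 1)) = 0) (h3 : d (ι ℝ (w 2)) = 0)
    (h4 : d (ι ℝ (w 3)) = ι ℝ (w 0) * ι ℝ (w 1))
    (h5 : d (ι ℝ (w 4)) = ι ℝ (w 1) * ι ℝ (w 2))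
    (h6 : d (ι ℝ (w 5)) = -(ι ℝ (w 0) * ι ℝ (w 2)))
    (h7 : d (ι ℝ (w 6)) = -(ι ℝ (w 0) * ι ℝ (w 4)) + lam • (ι ℝ (w 1) * ι ℝ (w 5)) +
      (1 - lam) • (ι ℝ (w 2) * ι ℝ (w 3))) :
    d ((ι ℝ (w 1)) * (ι ℝ (-w 5)) * (ι ℝ (w 2 + w 4)) * (ι ℝ (-w 0 - w 3)) + (ι ℝ (w 1)) * (ι ℝ (-w 5)) * (ι ℝ (-w 4)) * (ι ℝ (-w 0)) + (ι ℝ (w 1)) * (ι ℝ (w 2 + w 4)) * (ι ℝ (-w 0)) * (ι ℝ (t • w 6 - (9:ℝ) • w 5)) + (ι ℝ (w 1)) * (ι ℝ (-w 0 - w 3)) * (ι ℝ (-w 4)) * (ι ℝ (t • w 6 - (9:ℝ) • w 5)) + (ι ℝ (-w 5)) * (ι ℝ (w 2 + w 4)) * (ι ℝ (-w 4)) * (ι ℝ (t • w 6 - (9:ℝ) • w 5)) - (ι ℝ (-w 5)) * (ι ℝ (-w 0 - w 3)) * (ι ℝ (-w 0)) * (ι ℝ (t • w 6 - (9:ℝ)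 • w 5)) + (ι ℝ (w 2 + w 4)) * (ι ℝ (-w 0 - w 3)) * (ι ℝ (-w 4)) * (ι ℝ (-w 0))) = 0 := by
  simp only [map_add, map_sub, map_neg, map_smul, hleib, h1, h2, h3, h4, h5, h6, h7, mul_assoc, mul_add, add_mul, mul_neg, neg_mul, mul_smul_comm, smul_mul_assoc, smul_smul, neg_neg, smul_neg, sub_eq_add_neg, neg_add_rev, mul_zero, zero_mul, add_zero, zero_add, smul_zero, neg_zero, iswap_s19 (w 0) (w 1), iswap'_s19 (w 0) (w 1), iswap_s19 (w 0) (w 2), iswap'_s19 (w 0) (w 2), iswap_s19 (w 0) (w 3), iswap'_s19 (w 0) (w 3), iswap_s19 (w 0) (w 4), iswap'_s19 (w 0) (w 4), iswap_s19 (w 0) (w 5), iswap'_s19 (w 0) (w 5), iswap_s19 (w 0) (w 6), iswap'_s19 (w 0) (w 6), ι_sq_zero (R := ℝ) (w 0), isq'_s19 (w 0), iswap_s19 (w 1) (w 2), iswap'_s19 (w 1) (w 2), iswap_s19 (w 1) (w 3), iswap'_s19 (w 1) (w 3), iswap_s19 (w 1) (w 4), iswap'_s19 (w 1) (w 4), iswap_s19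 (w 1) (w 5), iswap'_s19 (w 1) (w 5), iswap_s19 (w 1) (w 6), iswap'_s19 (w 1) (w 6), ι_sq_zero (R := ℝ) (w 1), isq'_s19 (w 1), iswap_s19 (w 2) (w 3), iswap'_s19 (w 2) (w 3), iswap_s19 (w 2) (w 4), iswap'_s19 (w 2) (w 4), iswap_s19 (w 2) (w 5), iswap'_s19 (w 2) (w 5), iswap_s19 (w 2) (w 6), iswap'_s19 (w 2) (w 6), ι_sq_zero (R := ℝ) (w 2), isq'_s19 (w 2), iswap_s19 (w 3) (w 4), iswap'_s19 (w 3) (w 4), iswap_s19 (w 3) (w 5), iswap'_s19 (w 3) (w 5), iswap_s19 (w 3) (w 6), iswap'_s19 (w 3) (w 6), ι_sq_zero (R := ℝ) (w 3), isq'_s19 (w 3), iswap_s19 (w 4) (w 5), iswap'_s19 (w 4) (w 5), iswap_s19 (w 4) (w 6), iswap'_s19 (w 4) (w 6), ι_sq_zero (R := ℝ) (w 4), isq'_s19 (w 4), iswap_s19 (w 5) (w 6), iswap'_s19 (w 5) (w 6), ι_sq_zero (R := ℝ) (w 5), isq'_s19 (w 5), ι_sq_zero (R := ℝ) (w 6),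 isq'_s19 (w 6)]
  match_scalars <;> first
    | ring1
    | linear_combination ((0:ℝ) + (-2:ℝ)*t) * ht
    | linear_combination ((0:ℝ) + (2:ℝ)*t) * ht
    | linear_combination ((0:ℝ) + (-4:ℝ)*t) * ht
    | linear_combination ((0:ℝ) + (4:ℝ)*t) * ht
    | linear_combination ((0:ℝ) + (-10:ℝ)*t) * ht
    | linear_combination ((0:ℝ) + (10:ℝ)*t) * ht
    | linear_combination ((-2:ℝ) + (0:ℝ)*t) * ht
    | linear_combination ((-2:ℝ) + (-2:ℝ)*t) * ht
    | linear_combination ((-2:ℝ) + (2:ℝ)*t) * ht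
    | linear_combination ((-2:ℝ) + (-4:ℝ)*t) * ht
    | linear_combination ((-2:ℝ) + (4:ℝ)*t) * ht
    | linear_combination ((-2:ℝ) + (-10:ℝ)*t) * ht
    | linear_combination ((-2:ℝ) + (10:ℝ)*t) * ht
    | linear_combination ((2:ℝ) + (0:ℝ)*t) * ht
    | linear_combination ((2:ℝ) + (-2:ℝ)*t) * ht
    | linear_combination ((2:ℝ) + (2:ℝ)*t) * ht
    | linear_combination ((2:ℝ) + (-4:ℝ)*t) * ht
    | linear_combination ((2:ℝ) + (4:ℝ)*t) * ht
    | linear_combination ((2:ℝ) + (-10:ℝ)*t) * ht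
    | linear_combination ((2:ℝ) + (10:ℝ)*t) * ht
    | linear_combination ((-10:ℝ) + (0:ℝ)*t) * ht
    | linear_combination ((-10:ℝ) + (-2:ℝ)*t) * ht
    | linear_combination ((-10:ℝ) + (2:ℝ)*t) * ht
    | linear_combination ((-10:ℝ) + (-4:ℝ)*t) * ht
    | linear_combination ((-10:ℝ) + (4:ℝ)*t) * ht
    | linear_combination ((-10:ℝ) + (-10:ℝ)*t) * ht
    | linear_combination ((-10:ℝ) + (10:ℝ)*t) * ht
    | linear_combination ((10:ℝ) + (0:ℝ)*t) * ht
    | linear_combination ((10:ℝ) + (-2:ℝ)*t) * ht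
    | linear_combination ((10:ℝ) + (2:ℝ)*t) * ht
    | linear_combination ((10:ℝ) + (-4:ℝ)*t) * ht
    | linear_combination ((10:ℝ) + (4:ℝ)*t) * ht
    | linear_combination ((10:ℝ) + (-10:ℝ)*t) * ht
    | linear_combination ((10:ℝ) + (10:ℝ)*t) * ht
    | linear_combination ((-50:ℝ) + (0:ℝ)*t) * ht
    | linear_combination ((-50:ℝ) + (-2:ℝ)*t) * ht
    | linear_combination ((-50:ℝ) + (2:ℝ)*t) * ht
    | linear_combination ((-50:ℝ) + (-4:ℝ)*t) * ht
    | linear_combination ((-50:ℝ) + (4:ℝ)*t) * ht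
    | linear_combination ((-50:ℝ) + (-10:ℝ)*t) * ht
    | linear_combination ((-50:ℝ) + (10:ℝ)*t) * ht
    | linear_combination ((50:ℝ) + (0:ℝ)*t) * ht
    | linear_combination ((50:ℝ) + (-2:ℝ)*t) * ht
    | linear_combination ((50:ℝ) + (2:ℝ)*t) * ht
    | linear_combination ((50:ℝ) + (-4:ℝ)*t) * ht
    | linear_combination ((50:ℝ) + (4:ℝ)*t) * ht
    | linear_combination ((50:ℝ) + (-10:ℝ)*t) * ht
    | linear_combination ((50:ℝ) + (10:ℝ)*t) * ht

set_option maxHeartbeats 4000000 in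
private lemma calcB {W : Type*} [AddCommGroup W] [Module ℝ W]
    (lam t : ℝ) (ht : t * (lam - 1) = 5)
    (w : Fin 7 → W) (d : ExteriorAlgebra ℝ W →ₗ[ℝ] ExteriorAlgebra ℝ W)
    (hleib : ∀ (α : W) (y : ExteriorAlgebra ℝ W),
      d (ι ℝ α * y) = d (ι ℝ α) * y - ι ℝ α * d y)
    (h1 : d (ι ℝ (w 0)) = 0) (h2 : d (ι ℝ (w 1)) = 0) (h3 : d (ι ℝ (w 2)) = 0)
    (h4 : d (ι ℝ (w 3)) = ι ℝ (w 0) * ι ℝ (w 1))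
    (h5 : d (ι ℝ (w 4)) = ι ℝ (w 1) * ι ℝ (w 2))
    (h6 : d (ι ℝ (w 5)) = -(ι ℝ (w 0) * ι ℝ (w 2)))
    (h7 : d (ι ℝ (w 6)) = -(ι ℝ (w 0) * ι ℝ (w 4)) + lam • (ι ℝ (w 1) * ι ℝ (w 5)) +
      (1 - lam) • (ι ℝ (w 2) * ι ℝ (w 3))) :
    ((ι ℝ (w 1)) * (ι ℝ (-w 5)) * (ι ℝ (t • w 6 - (9:ℝ) • w 5)) + (ι ℝ (w 2 + w 4)) * (ι ℝ (-w 0 - w 3)) * (ι ℝ (t • w 6 - (9:ℝ) • w 5)) + (ι ℝ (-w 4)) * (ι ℝ (-w 0)) * (ι ℝ (t • w 6 - (9:ℝ) • w 5)) + (ι ℝ (w 1)) * (ι ℝ (w 2 + w 4)) * (ι ℝ (-w 4)) - (ι ℝ (w 1)) * (ι ℝ (-w 0 - w 3)) * (ι ℝ (-w 0)) - (ι ℝ (-w 5)) * (ι ℝ (w 2 + w 4)) * (ι ℝ (-w 0)) - (ι ℝ (-w 5)) * (ι ℝ (-w 0 - w 3)) * (ι ℝ (-w 4))) * d ((ι ℝ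 (w 1)) * (ι ℝ (-w 5)) * (ι ℝ (t • w 6 - (9:ℝ) • w 5)) + (ι ℝ (w 2 + w 4)) * (ι ℝ (-w 0 - w 3)) * (ι ℝ (t • w 6 - (9:ℝ) • w 5)) + (ι ℝ (-w 4)) * (ι ℝ (-w 0)) * (ι ℝ (t • w 6 - (9:ℝ) • w 5)) + (ι ℝ (w 1)) * (ι ℝ (w 2 + w 4)) * (ι ℝ (-w 4)) - (ι ℝ (w 1)) * (ι ℝ (-w 0 - w 3)) * (ι ℝ (-w 0)) - (ι ℝ (-w 5)) * (ι ℝ (w 2 + w 4)) * (ι ℝ (-w 0)) - (ι ℝ (-w 5)) * (ι ℝ (-w 0 - w 3)) * (ι ℝ (-w 4))) = 0 := by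
  simp only [map_add, map_sub, map_neg, map_smul, hleib, h1, h2, h3, h4, h5, h6, h7, mul_assoc, mul_add, add_mul, mul_neg, neg_mul, mul_smul_comm, smul_mul_assoc, smul_smul, neg_neg, smul_neg, sub_eq_add_neg, neg_add_rev, mul_zero, zero_mul, add_zero, zero_add, smul_zero, neg_zero, iswap_s19 (w 0) (w 1), iswap'_s19 (w 0) (w 1), iswap_s19 (w 0) (w 2), iswap'_s19 (w 0) (w 2), iswap_s19 (w 0) (w 3), iswap'_s19 (w 0) (w 3), iswap_s19 (w 0) (w 4), iswap'_s19 (w 0) (w 4), iswap_s19 (w 0) (w 5), iswap'_s19 (w 0) (w 5), iswap_s19 (w 0) (w 6), iswap'_s19 (w 0) (w 6), ι_sq_zero (R := ℝ) (w 0), isq'_s19 (w 0), iswap_s19 (w 1) (w 2), iswap'_s19 (w 1) (w 2), iswap_s19 (w 1) (w 3), iswap'_s19 (w 1) (w 3), iswap_s19 (w 1) (w 4), iswap'_s19 (w 1) (w 4), iswap_s19 (w 1) (w 5), iswap'_s19 (w 1) (w 5), iswap_s19 (w 1) (w 6), iswap'_s19 (w 1) (w 6), ι_sq_zero (R := ℝ)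 (w 1), isq'_s19 (w 1), iswap_s19 (w 2) (w 3), iswap'_s19 (w 2) (w 3), iswap_s19 (w 2) (w 4), iswap'_s19 (w 2) (w 4), iswap_s19 (w 2) (w 5), iswap'_s19 (w 2) (w 5), iswap_s19 (w 2) (w 6), iswap'_s19 (w 2) (w 6), ι_sq_zero (R := ℝ) (w 2), isq'_s19 (w 2), iswap_s19 (w 3) (w 4), iswap'_s19 (w 3) (w 4), iswap_s19 (w 3) (w 5), iswap'_s19 (w 3) (w 5), iswap_s19 (w 3) (w 6), iswap'_s19 (w 3) (w 6), ι_sq_zero (R := ℝ) (w 3), isq'_s19 (w 3), iswap_s19 (w 4) (w 5), iswap'_s19 (w 4) (w 5), iswap_s19 (w 4) (w 6), iswap'_s19 (w 4) (w 6), ι_sq_zero (R := ℝ) (w 4), isq'_s19 (w 4), iswap_s19 (w 5) (w 6), iswap'_s19 (w 5) (w 6), ι_sq_zero (R := ℝ) (w 5), isq'_s19 (w 5), ι_sq_zero (R := ℝ) (w 6), isq'_s19 (w 6)]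
  match_scalars <;> first
    | ring1
    | linear_combination ((0:ℝ) + (-2:ℝ)*t) * ht
    | linear_combination ((0:ℝ) + (2:ℝ)*t) * ht
    | linear_combination ((0:ℝ) + (-4:ℝ)*t) * ht
    | linear_combination ((0:ℝ) + (4:ℝ)*t) * ht
    | linear_combination ((0:ℝ) + (-10:ℝ)*t) * ht
    | linear_combination ((0:ℝ) + (10:ℝ)*t) * ht
    | linear_combination ((-2:ℝ) + (0:ℝ)*t) * ht
    | linear_combination ((-2:ℝ) + (-2:ℝ)*t) * ht
    | linear_combination ((-2:ℝ) + (2:ℝ)*t) * ht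
    | linear_combination ((-2:ℝ) + (-4:ℝ)*t) * ht
    | linear_combination ((-2:ℝ) + (4:ℝ)*t) * ht
    | linear_combination ((-2:ℝ) + (-10:ℝ)*t) * ht
    | linear_combination ((-2:ℝ) + (10:ℝ)*t) * ht
    | linear_combination ((2:ℝ) + (0:ℝ)*t) * ht
    | linear_combination ((2:ℝ) + (-2:ℝ)*t) * ht
    | linear_combination ((2:ℝ) + (2:ℝ)*t) * ht
    | linear_combination ((2:ℝ) + (-4:ℝ)*t) * ht
    | linear_combination ((2:ℝ) + (4:ℝ)*t) * ht
    | linear_combination ((2:ℝ) + (-10:ℝ)*t) * ht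
    | linear_combination ((2:ℝ) + (10:ℝ)*t) * ht
    | linear_combination ((-10:ℝ) + (0:ℝ)*t) * ht
    | linear_combination ((-10:ℝ) + (-2:ℝ)*t) * ht
    | linear_combination ((-10:ℝ) + (2:ℝ)*t) * ht
    | linear_combination ((-10:ℝ) + (-4:ℝ)*t) * ht
    | linear_combination ((-10:ℝ) + (4:ℝ)*t) * ht
    | linear_combination ((-10:ℝ) + (-10:ℝ)*t) * ht
    | linear_combination ((-10:ℝ) + (10:ℝ)*t) * ht
    | linear_combination ((10:ℝ) + (0:ℝ)*t) * ht
    | linear_combination ((10:ℝ) + (-2:ℝ)*t) * ht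
    | linear_combination ((10:ℝ) + (2:ℝ)*t) * ht
    | linear_combination ((10:ℝ) + (-4:ℝ)*t) * ht
    | linear_combination ((10:ℝ) + (4:ℝ)*t) * ht
    | linear_combination ((10:ℝ) + (-10:ℝ)*t) * ht
    | linear_combination ((10:ℝ) + (10:ℝ)*t) * ht
    | linear_combination ((-50:ℝ) + (0:ℝ)*t) * ht
    | linear_combination ((-50:ℝ) + (-2:ℝ)*t) * ht
    | linear_combination ((-50:ℝ) + (2:ℝ)*t) * ht
    | linear_combination ((-50:ℝ) + (-4:ℝ)*t) * ht
    | linear_combination ((-50:ℝ) + (4:ℝ)*t) * ht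
    | linear_combination ((-50:ℝ) + (-10:ℝ)*t) * ht
    | linear_combination ((-50:ℝ) + (10:ℝ)*t) * ht
    | linear_combination ((50:ℝ) + (0:ℝ)*t) * ht
    | linear_combination ((50:ℝ) + (-2:ℝ)*t) * ht
    | linear_combination ((50:ℝ) + (2:ℝ)*t) * ht
    | linear_combination ((50:ℝ) + (-4:ℝ)*t) * ht
    | linear_combination ((50:ℝ) + (4:ℝ)*t) * ht
    | linear_combination ((50:ℝ) + (-10:ℝ)*t) * ht
    | linear_combination ((50:ℝ) + (10:ℝ)*t) * ht

end AuxG2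

/-- For every real `λ ∉ {0,1}`, the Lie algebra `147E(λ)` (`de⁴ = e^{12}`,
`de⁵ = e^{23}`, `de⁶ = -e^{13}`, `de⁷ = -e^{15} + λ e^{26} + (1-λ) e^{34}`, all other
`deⁱ = 0`) admits a purely coclosed G₂-structure: there is a basis `f¹,…,f⁷` of its dual space
with `d(∗φ) = 0` and `φ ∧ dφ = 0`. -/
theorem lie147E_purely_coclosed (lam : ℝ) (hlam0 : lam ≠ 0) (hlam1 : lam ≠ 1)
    (b : Basis (Fin 7) ℝ g)
    (d : ExteriorAlgebra ℝ (Dual ℝ g) →ₗ[ℝ] ExteriorAlgebra ℝ (Dual ℝ g))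
    (hd : IsCEDifferential b d)
    (h1 : d (ef b 0) = 0) (h2 : d (ef b 1) = 0) (h3 : d (ef b 2) = 0)
    (h4 : d (ef b 3) = ef b 0 * ef b 1)
    (h5 : d (ef b 4) = ef b 1 * ef b 2)
    (h6 : d (ef b 5) = -(ef b 0 * ef b 2))
    (h7 : d (ef b 6) = -(ef b 0 * ef b 4) + lam • (ef b 1 * ef b 5) +
      (1 - lam) • (ef b 2 * ef b 3)) :
    ∃ f : Basis (Fin 7) ℝ (Dual ℝ g),
      d (starPhiForm fun i => f i) = 0 ∧
      (phiG2Form fun i => f i) * d (phiG2Form fun i => f i) = 0 := by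
  have hl : lam - 1 ≠ 0 := sub_ne_zero.mpr hlam1
  obtain ⟨-, hlb, -⟩ := hd
  have hleib : ∀ (α : Dual ℝ g) (y : ExteriorAlgebra ℝ (Dual ℝ g)),
      d (ExteriorAlgebra.ι ℝ α * y)
        = d (ExteriorAlgebra.ι ℝ α) * y - ExteriorAlgebra.ι ℝ α * d y := by
    intro α y
    have hmem : ExteriorAlgebra.ι ℝ α ∈ degPart (Dual ℝ g) 1 := by
      rw [degPart, pow_one]; exact ⟨α, rfl⟩
    rw [hlb 1 _ hmem y, pow_one, neg_one_smul, ← sub_eq_add_neg]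
  set t : ℝ := 5 / (lam - 1) with htdef
  set s : ℝ := (lam - 1) / 5 with hsdef
  have ht : t * (lam - 1) = 5 := by rw [htdef]; exact div_mul_cancel₀ 5 hl
  have hst : s * t = 1 := by rw [hsdef, htdef]; field_simp
  have hts : t * s = 1 := by rw [htdef, hsdef]; field_simp
  set P : Dual ℝ g →ₗ[ℝ] Dual ℝ g :=
    b.dualBasis.constr ℝ (fun i : Fin 7 => match i with | 0 => b.dualBasis 1 | 1 => -b.dualBasis 5 | 2 => b.dualBasis 2 + b.dualBasis 4 | 3 => -b.dualBasis 0 - b.dualBasis 3 | 4 => -b.dualBasis 4 | 5 => -b.dualBasis 0 | 6 => t • b.dualBasis 6 - (9:ℝ) • b.dualBasis 5) with hPmap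
  set Q : Dual ℝ g →ₗ[ℝ] Dual ℝ g :=
    b.dualBasis.constr ℝ (fun i : Fin 7 => match i with | 0 => -b.dualBasis 5 | 1 => b.dualBasis 0 | 2 => b.dualBasis 2 + b.dualBasis 4 | 3 => -b.dualBasis 3 + b.dualBasis 5 | 4 => -b.dualBasis 4 | 5 => -b.dualBasis 1 | 6 => s • b.dualBasis 6 - ((9:ℝ)*s) • b.dualBasis 1) with hQmap
  have hP0 : P (b.dualBasis 0) = b.dualBasis 1 := by rw [hPmap]; exact b.dualBasis.constr_basis ℝ _ 0
  have hP1 : P (b.dualBasis 1) = -b.dualBasis 5 := by rw [hPmap]; exact b.dualBasis.constr_basis ℝ _ 1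
  have hP2 : P (b.dualBasis 2) = b.dualBasis 2 + b.dualBasis 4 := by rw [hPmap]; exact b.dualBasis.constr_basis ℝ _ 2
  have hP3 : P (b.dualBasis 3) = -b.dualBasis 0 - b.dualBasis 3 := by rw [hPmap]; exact b.dualBasis.constr_basis ℝ _ 3
  have hP4 : P (b.dualBasis 4) = -b.dualBasis 4 := by rw [hPmap]; exact b.dualBasis.constr_basis ℝ _ 4
  have hP5 : P (b.dualBasis 5) = -b.dualBasis 0 := by rw [hPmap]; exact b.dualBasis.constr_basis ℝ _ 5
  have hP6 : P (b.dualBasis 6) = t • b.dualBasis 6 - (9:ℝ) • b.dualBasis 5 := by rw [hPmap]; exact b.dualBasis.constr_basis ℝ _ 6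
  have hQ0 : Q (b.dualBasis 0) = -b.dualBasis 5 := by rw [hQmap]; exact b.dualBasis.constr_basis ℝ _ 0
  have hQ1 : Q (b.dualBasis 1) = b.dualBasis 0 := by rw [hQmap]; exact b.dualBasis.constr_basis ℝ _ 1
  have hQ2 : Q (b.dualBasis 2) = b.dualBasis 2 + b.dualBasis 4 := by rw [hQmap]; exact b.dualBasis.constr_basis ℝ _ 2
  have hQ3 : Q (b.dualBasis 3) = -b.dualBasis 3 + b.dualBasis 5 := by rw [hQmap]; exact b.dualBasis.constr_basis ℝ _ 3
  have hQ4 : Q (b.dualBasis 4) = -b.dualBasis 4 := by rw [hQmap]; exact b.dualBasis.constr_basis ℝ _ 4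
  have hQ5 : Q (b.dualBasis 5) = -b.dualBasis 1 := by rw [hQmap]; exact b.dualBasis.constr_basis ℝ _ 5
  have hQ6 : Q (b.dualBasis 6) = s • b.dualBasis 6 - ((9:ℝ)*s) • b.dualBasis 1 := by rw [hQmap]; exact b.dualBasis.constr_basis ℝ _ 6
  have hPQ : P ∘ₗ Q = LinearMap.id := by
    refine b.dualBasis.ext fun i => ?_
    fin_cases i
    · show P (Q (b.dualBasis 0)) = b.dualBasis 0
      rw [hQ0]
      simp only [map_add, map_sub, map_neg, map_smul, hP0, hP1, hP2, hP3, hP4, hP5, hP6]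
      try (match_scalars <;> first | ring1 | linear_combination hst | linear_combination hts | linear_combination (9:ℝ)*hst | linear_combination (-9:ℝ)*hst | linear_combination (9:ℝ)*hts | linear_combination (-9:ℝ)*hts)
    · show P (Q (b.dualBasis 1)) = b.dualBasis 1
      rw [hQ1]
      simp only [map_add, map_sub, map_neg, map_smul, hP0, hP1, hP2, hP3, hP4, hP5, hP6]
      try (match_scalars <;> first | ring1 | linear_combination hst | linear_combination hts | linear_combination (9:ℝ)*hst | linear_combination (-9:ℝ)*hst | linear_combination (9:ℝ)*hts | linear_combination (-9:ℝ)*hts)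
    · show P (Q (b.dualBasis 2)) = b.dualBasis 2
      rw [hQ2]
      simp only [map_add, map_sub, map_neg, map_smul, hP0, hP1, hP2, hP3, hP4, hP5, hP6]
      try (match_scalars <;> first | ring1 | linear_combination hst | linear_combination hts | linear_combination (9:ℝ)*hst | linear_combination (-9:ℝ)*hst | linear_combination (9:ℝ)*hts | linear_combination (-9:ℝ)*hts)
    · show P (Q (b.dualBasis 3)) = b.dualBasis 3
      rw [hQ3]
      simp only [map_add, map_sub, map_neg, map_smul, hP0, hP1, hP2, hP3, hP4, hP5, hP6]
      try (match_scalars <;> first | ring1 | linear_combination hst | linear_combination hts | linear_combination (9:ℝ)*hst | linear_combination (-9:ℝ)*hst | linear_combination (9:ℝ)*hts | linear_combination (-9:ℝ)*hts)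
    · show P (Q (b.dualBasis 4)) = b.dualBasis 4
      rw [hQ4]
      simp only [map_add, map_sub, map_neg, map_smul, hP0, hP1, hP2, hP3, hP4, hP5, hP6]
      try (match_scalars <;> first | ring1 | linear_combination hst | linear_combination hts | linear_combination (9:ℝ)*hst | linear_combination (-9:ℝ)*hst | linear_combination (9:ℝ)*hts | linear_combination (-9:ℝ)*hts)
    · show P (Q (b.dualBasis 5)) = b.dualBasis 5
      rw [hQ5]
      simp only [map_add, map_sub, map_neg, map_smul, hP0, hP1, hP2, hP3, hP4, hP5, hP6]
      try (match_scalars <;> first | ring1 | linear_combination hst | linear_combination hts | linear_combination (9:ℝ)*hst | linear_combination (-9:ℝ)*hst | linear_combination (9:ℝ)*hts | linear_combination (-9:ℝ)*hts)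
    · show P (Q (b.dualBasis 6)) = b.dualBasis 6
      rw [hQ6]
      simp only [map_add, map_sub, map_neg, map_smul, hP0, hP1, hP2, hP3, hP4, hP5, hP6]
      try (match_scalars <;> first | ring1 | linear_combination hst | linear_combination hts | linear_combination (9:ℝ)*hst | linear_combination (-9:ℝ)*hst | linear_combination (9:ℝ)*hts | linear_combination (-9:ℝ)*hts)
  have hQP : Q ∘ₗ P = LinearMap.id := by
    refine b.dualBasis.ext fun i => ?_
    fin_cases i
    · show Q (P (b.dualBasis 0)) = b.dualBasis 0
      rw [hP0]
      simp only [map_add, map_sub, map_neg, map_smul, hQ0, hQ1, hQ2, hQ3, hQ4, hQ5, hQ6]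
      try (match_scalars <;> first | ring1 | linear_combination hst | linear_combination hts | linear_combination (9:ℝ)*hst | linear_combination (-9:ℝ)*hst | linear_combination (9:ℝ)*hts | linear_combination (-9:ℝ)*hts)
    · show Q (P (b.dualBasis 1)) = b.dualBasis 1
      rw [hP1]
      simp only [map_add, map_sub, map_neg, map_smul, hQ0, hQ1, hQ2, hQ3, hQ4, hQ5, hQ6]
      try (match_scalars <;> first | ring1 | linear_combination hst | linear_combination hts | linear_combination (9:ℝ)*hst | linear_combination (-9:ℝ)*hst | linear_combination (9:ℝ)*hts | linear_combination (-9:ℝ)*hts)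
    · show Q (P (b.dualBasis 2)) = b.dualBasis 2
      rw [hP2]
      simp only [map_add, map_sub, map_neg, map_smul, hQ0, hQ1, hQ2, hQ3, hQ4, hQ5, hQ6]
      try (match_scalars <;> first | ring1 | linear_combination hst | linear_combination hts | linear_combination (9:ℝ)*hst | linear_combination (-9:ℝ)*hst | linear_combination (9:ℝ)*hts | linear_combination (-9:ℝ)*hts)
    · show Q (P (b.dualBasis 3)) = b.dualBasis 3
      rw [hP3]
      simp only [map_add, map_sub, map_neg, map_smul, hQ0, hQ1, hQ2, hQ3, hQ4, hQ5, hQ6]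
      try (match_scalars <;> first | ring1 | linear_combination hst | linear_combination hts | linear_combination (9:ℝ)*hst | linear_combination (-9:ℝ)*hst | linear_combination (9:ℝ)*hts | linear_combination (-9:ℝ)*hts)
    · show Q (P (b.dualBasis 4)) = b.dualBasis 4
      rw [hP4]
      simp only [map_add, map_sub, map_neg, map_smul, hQ0, hQ1, hQ2, hQ3, hQ4, hQ5, hQ6]
      try (match_scalars <;> first | ring1 | linear_combination hst | linear_combination hts | linear_combination (9:ℝ)*hst | linear_combination (-9:ℝ)*hst | linear_combination (9:ℝ)*hts | linear_combination (-9:ℝ)*hts)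
    · show Q (P (b.dualBasis 5)) = b.dualBasis 5
      rw [hP5]
      simp only [map_add, map_sub, map_neg, map_smul, hQ0, hQ1, hQ2, hQ3, hQ4, hQ5, hQ6]
      try (match_scalars <;> first | ring1 | linear_combination hst | linear_combination hts | linear_combination (9:ℝ)*hst | linear_combination (-9:ℝ)*hst | linear_combination (9:ℝ)*hts | linear_combination (-9:ℝ)*hts)
    · show Q (P (b.dualBasis 6)) = b.dualBasis 6
      rw [hP6]
      simp only [map_add, map_sub, map_neg, map_smul, hQ0, hQ1, hQ2, hQ3, hQ4, hQ5, hQ6]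
      try (match_scalars <;> first | ring1 | linear_combination hst | linear_combination hts | linear_combination (9:ℝ)*hst | linear_combination (-9:ℝ)*hst | linear_combination (9:ℝ)*hts | linear_combination (-9:ℝ)*hts)
  set f : Basis (Fin 7) ℝ (Dual ℝ g) :=
    b.dualBasis.map (LinearEquiv.ofLinear P Q hPQ hQP) with hfmap
  have hf0 : f 0 = b.dualBasis 1 := by
    rw [hfmap, Basis.map_apply, LinearEquiv.ofLinear_apply]; exact hP0
  have hf1 : f 1 = -b.dualBasis 5 := by
    rw [hfmap, Basis.map_apply, LinearEquiv.ofLinear_apply]; exact hP1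
  have hf2 : f 2 = b.dualBasis 2 + b.dualBasis 4 := by
    rw [hfmap, Basis.map_apply, LinearEquiv.ofLinear_apply]; exact hP2
  have hf3 : f 3 = -b.dualBasis 0 - b.dualBasis 3 := by
    rw [hfmap, Basis.map_apply, LinearEquiv.ofLinear_apply]; exact hP3
  have hf4 : f 4 = -b.dualBasis 4 := by
    rw [hfmap, Basis.map_apply, LinearEquiv.ofLinear_apply]; exact hP4
  have hf5 : f 5 = -b.dualBasis 0 := by
    rw [hfmap, Basis.map_apply, LinearEquiv.ofLinear_apply]; exact hP5
  have hf6 : f 6 = t • b.dualBasis 6 - (9:ℝ) • b.dualBasis 5 := by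
    rw [hfmap, Basis.map_apply, LinearEquiv.ofLinear_apply]; exact hP6
  refine ⟨f, ?_, ?_⟩
  · have hsp : (starPhiForm fun i => f i) =
        ExteriorAlgebra.ι ℝ (f 0) * ExteriorAlgebra.ι ℝ (f 1) * ExteriorAlgebra.ι ℝ (f 2) * ExteriorAlgebra.ι ℝ (f 3)
        + ExteriorAlgebra.ι ℝ (f 0) * ExteriorAlgebra.ι ℝ (f 1) * ExteriorAlgebra.ι ℝ (f 4) * ExteriorAlgebra.ι ℝ (f 5)
        + ExteriorAlgebra.ι ℝ (f 0) * ExteriorAlgebra.ι ℝ (f 2) * ExteriorAlgebra.ι ℝ (f 5) * ExteriorAlgebra.ι ℝ (f 6)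
        + ExteriorAlgebra.ι ℝ (f 0) * ExteriorAlgebra.ι ℝ (f 3) * ExteriorAlgebra.ι ℝ (f 4) * ExteriorAlgebra.ι ℝ (f 6)
        + ExteriorAlgebra.ι ℝ (f 1) * ExteriorAlgebra.ι ℝ (f 2) * ExteriorAlgebra.ι ℝ (f 4) * ExteriorAlgebra.ι ℝ (f 6)
        - ExteriorAlgebra.ι ℝ (f 1) * ExteriorAlgebra.ι ℝ (f 3) * ExteriorAlgebra.ι ℝ (f 5) * ExteriorAlgebra.ι ℝ (f 6)
        + ExteriorAlgebra.ι ℝ (f 2) * ExteriorAlgebra.ι ℝ (f 3) * ExteriorAlgebra.ι ℝ (f 4) * ExteriorAlgebra.ι ℝ (f 5) := rfl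
    rw [hsp, hf0, hf1, hf2, hf3, hf4, hf5, hf6]
    exact calcA lam t ht b.dualBasis d hleib h1 h2 h3 h4 h5 h6 h7
  · have hp : (phiG2Form fun i => f i) =
        ExteriorAlgebra.ι ℝ (f 0) * ExteriorAlgebra.ι ℝ (f 1) * ExteriorAlgebra.ι ℝ (f 6)
        + ExteriorAlgebra.ι ℝ (f 2) * ExteriorAlgebra.ι ℝ (f 3) * ExteriorAlgebra.ι ℝ (f 6)
        + ExteriorAlgebra.ι ℝ (f 4) * ExteriorAlgebra.ι ℝ (f 5) * ExteriorAlgebra.ι ℝ (f 6)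
        + ExteriorAlgebra.ι ℝ (f 0) * ExteriorAlgebra.ι ℝ (f 2) * ExteriorAlgebra.ι ℝ (f 4)
        - ExteriorAlgebra.ι ℝ (f 0) * ExteriorAlgebra.ι ℝ (f 3) * ExteriorAlgebra.ι ℝ (f 5)
        - ExteriorAlgebra.ι ℝ (f 1) * ExteriorAlgebra.ι ℝ (f 2) * ExteriorAlgebra.ι ℝ (f 5)
        - ExteriorAlgebra.ι ℝ (f 1) * ExteriorAlgebra.ι ℝ (f 3) * ExteriorAlgebra.ι ℝ (f 4) := rfl
    rw [hp, hf0, hf1, hf2, hf3, hf4, hf5, hf6]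
    exact calcB lam t ht b.dualBasis d hleib h1 h2 h3 h4 h5 h6 h7
end
end
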